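/- arXiv:2401.15802 — 9 statements merged into one kernel-verified Lean document; each statement's English description precedes it below -/
import Mathlib

section
/- Let Z_* > 0, A_* ∈ [0, Z_*), λ ≥ (3/2)Z_*, γ, ε ∈ ℝ, and let k be a nonzero integer. Let f(r) := sqrt(1 − 2A_*/r + Z_*^2/r^2) for r > 0. Let r₀ > 0 and let Ω : (0, r₀] → ℝ be differentiable and satisfy the Prüfer angle equation Ω'(r) = (2/f(r))·cos Ω(r) + (2/f(r))·(k/r − λ/r^2)·sin Ω(r) + (2/f(r)^2)·(γ/r − ε), and suppose lim_{r→0⁺} Ω(r) = 2πm for some integer m (the orbit emanates from the saddle S^−). Define R(r) := exp( − ∫_r^{r₀} [ sin Ω(s)/f(s) + (λ/s^2 − k/s)·cos Ω(s)/f(s) ] ds ). Then ∫_0^{r₀} R(r)^2 / f(r)^2 dr < ∞. -/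
set_option maxHeartbeats 1000000

open MeasureTheory Set Filter intervalIntegral

/-- A Prüfer orbit emanating from the saddle `S⁻` (i.e. `Ω → 0 mod 2π`
as `r → 0⁺`) has square-integrable amplitude near `r = 0`. -/
theorem rwn_L2_near_zero_saddle (Zs As lam γ ε : ℝ) (k : ℤ)
    (hZ : 0 < Zs) (hAs : As ∈ Set.Ico (0 : ℝ) Zs) (hlam : (3 / 2) * Zs ≤ lam)
    (hk : k ≠ 0)
    (f : ℝ → ℝ) (hf : ∀ r, f r = Real.sqrt (1 - 2 * As / r + Zs ^ 2 / r ^ 2))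
    (r₀ : ℝ) (hr₀ : 0 < r₀) (Ω : ℝ → ℝ)
    (hΩ : ∀ r ∈ Set.Ioc (0 : ℝ) r₀, HasDerivAt Ω
      ((2 / f r) * Real.cos (Ω r)
        + (2 / f r) * ((k : ℝ) / r - lam / r ^ 2) * Real.sin (Ω r)
        + (2 / (f r) ^ 2) * (γ / r - ε)) r)
    (m : ℤ)
    (hlim : Filter.Tendsto Ω (nhdsWithin 0 (Set.Ioi 0)) (nhds (2 * Real.pi * (m : ℝ))))
    (R : ℝ → ℝ)
    (hR : ∀ r, R r = Real.exp (-(∫ s in r..r₀,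
      (Real.sin (Ω s) / f s + (lam / s ^ 2 - (k : ℝ) / s) * Real.cos (Ω s) / f s)))) :
    MeasureTheory.IntegrableOn (fun r => (R r) ^ 2 / (f r) ^ 2) (Set.Ioc 0 r₀) := by
  obtain ⟨hA0, hAZ⟩ := hAs
  have hZA : 0 < Zs ^ 2 - As ^ 2 := by nlinarith
  have hlam0 : 0 < lam := lt_of_lt_of_le (by positivity) hlam
  set g : ℝ → ℝ := fun s =>
    Real.sin (Ω s) / f s + (lam / s ^ 2 - (k : ℝ) / s) * Real.cos (Ω s) / f s with hgdef
  -- basic facts about f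
  have harg : ∀ r : ℝ, 0 < r → 0 < 1 - 2 * As / r + Zs ^ 2 / r ^ 2 := by
    intro r hr
    have h1 : 1 - 2 * As / r + Zs ^ 2 / r ^ 2 = ((r - As) ^ 2 + (Zs ^ 2 - As ^ 2)) / r ^ 2 := by
      field_simp; ring
    rw [h1]; positivity
  have hfpos : ∀ r : ℝ, 0 < r → 0 < f r := by
    intro r hr; rw [hf]; exact Real.sqrt_pos.2 (harg r hr)
  have hfsq : ∀ r : ℝ, 0 < r → f r ^ 2 = 1 - 2 * As / r + Zs ^ 2 / r ^ 2 := by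
    intro r hr; rw [hf]; exact Real.sq_sqrt (harg r hr).le
  have hflb : ∀ r ∈ Ioc (0 : ℝ) r₀, (Zs ^ 2 - As ^ 2) / r₀ ^ 2 ≤ f r ^ 2 := by
    intro r hr
    have hrne : r ≠ 0 := hr.1.ne'
    rw [hfsq r hr.1]
    have he : 1 - 2 * As / r + Zs ^ 2 / r ^ 2 = (r ^ 2 - 2 * As * r + Zs ^ 2) / r ^ 2 := by
      field_simp
    rw [he]
    apply div_le_div₀ (by nlinarith [sq_nonneg (r - As)]) (by nlinarith [sq_nonneg (r - As)])
      (by positivity)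
    exact pow_le_pow_left₀ hr.1.le hr.2 2
  -- continuity of f on Ioi 0
  have hfcont : ∀ r : ℝ, 0 < r → ContinuousAt f r := by
    intro r hr
    have h1 : ContinuousAt (fun s : ℝ => 1 - 2 * As / s + Zs ^ 2 / s ^ 2) r := by
      apply ContinuousAt.add
      · exact continuousAt_const.sub (continuousAt_const.div continuousAt_id hr.ne')
      · exact continuousAt_const.div (continuousAt_pow r 2) (pow_ne_zero 2 hr.ne')
    have h2 : ContinuousAt (fun s : ℝ => Real.sqrt (1 - 2 * As / s + Zs ^ 2 / s ^ 2)) r :=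
      Real.continuous_sqrt.continuousAt.comp h1
    have : f = fun s : ℝ => Real.sqrt (1 - 2 * As / s + Zs ^ 2 / s ^ 2) := funext hf
    rw [this]; exact h2
  -- Ω is continuous on Ioc 0 r₀
  have hΩcont : ∀ r ∈ Ioc (0 : ℝ) r₀, ContinuousAt Ω r := fun r hr => (hΩ r hr).continuousAt
  -- g is continuous at each point of Ioc 0 r₀
  have hgcont : ∀ r ∈ Ioc (0 : ℝ) r₀, ContinuousAt g r := by
    intro r hr
    have hΩc := hΩcont r hr
    have hfc := hfcont r hr.1
    have hfne : f r ≠ 0 := (hfpos r hr.1).ne'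
    have h1 : ContinuousAt (fun s => Real.sin (Ω s)) r :=
      Real.continuous_sin.continuousAt.comp hΩc
    have h2 : ContinuousAt (fun s => Real.cos (Ω s)) r :=
      Real.continuous_cos.continuousAt.comp hΩc
    have h3 : ContinuousAt (fun s : ℝ => lam / s ^ 2 - (k : ℝ) / s) r := by
      apply ContinuousAt.sub
      · exact continuousAt_const.div (continuousAt_pow r 2) (pow_ne_zero 2 hr.1.ne')
      · exact continuousAt_const.div continuousAt_id hr.1.ne'
    exact (h1.div hfc hfne).add (((h3.mul h2).div hfc hfne))
  have hgconIcc : ∀ c : ℝ, 0 < c → ContinuousOn g (Icc c r₀) := by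
    intro c hc r hr
    exact (hgcont r ⟨lt_of_lt_of_le hc hr.1, hr.2⟩).continuousWithinAt
  have hgint : ∀ a b : ℝ, 0 < a → a ≤ b → b ≤ r₀ → IntervalIntegrable g volume a b := by
    intro a b ha hab hbr
    apply ContinuousOn.intervalIntegrable
    intro x hx
    rw [uIcc_of_le hab] at hx
    exact (hgcont x ⟨lt_of_lt_of_le ha hx.1, hx.2.trans hbr⟩).continuousWithinAt
  -- choose δ on which g ≥ 0
  have hc1 : 0 < Real.cos 1 := Real.cos_one_pos
  obtain ⟨δ₁, hδ₁pos, hδ₁⟩ := Metric.tendsto_nhdsWithin_nhds.mp hlim 1 one_pos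
  set δ : ℝ := min (min r₀ (δ₁ / 2)) (min (lam / (2 * (|(k : ℝ)| + 1))) (Real.sqrt (lam * Real.cos 1 / 2))) with hδdef
  have hkpos : (0:ℝ) < |(k : ℝ)| + 1 := by positivity
  have hδpos : 0 < δ := by
    apply lt_min (lt_min hr₀ (by positivity))
    apply lt_min (by positivity)
    exact Real.sqrt_pos.2 (by positivity)
  have hδr₀ : δ ≤ r₀ := le_trans (min_le_left _ _) (min_le_left _ _)
  have hcosΩ : ∀ s ∈ Ioc (0 : ℝ) δ, Real.cos 1 ≤ Real.cos (Ω s) := by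
    intro s hs
    have hsδ₁ : dist s (0:ℝ) < δ₁ := by
      rw [Real.dist_eq, sub_zero, abs_of_pos hs.1]
      calc s ≤ δ := hs.2
        _ ≤ δ₁ / 2 := le_trans (min_le_left _ _) (min_le_right _ _)
        _ < δ₁ := by linarith
    have hd := hδ₁ hs.1 hsδ₁
    rw [Real.dist_eq] at hd
    have h1 : Real.cos (Ω s) = Real.cos (Ω s - 2 * Real.pi * m) := by
      have heq : Ω s = (Ω s - 2 * Real.pi * m) + (m : ℤ) * (2 * Real.pi) := by push_cast; ring
      conv_lhs => rw [heq]
      rw [Real.cos_add_int_mul_two_pi]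
    rw [h1]
    conv_rhs => rw [← Real.cos_abs]
    exact Real.cos_le_cos_of_nonneg_of_le_pi (abs_nonneg _)
      (by linarith [Real.pi_gt_three]) hd.le
  have hgnn : ∀ s ∈ Ioc (0 : ℝ) δ, 0 ≤ g s := by
    intro s hs
    have hs0 : 0 < s := hs.1
    have hfne : 0 < f s := hfpos s hs0
    have hcosle : Real.cos (Ω s) ≤ 1 := Real.cos_le_one _
    have hcosge : Real.cos 1 ≤ Real.cos (Ω s) := hcosΩ s hs
    have hsinle : -1 ≤ Real.sin (Ω s) := Real.neg_one_le_sin _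
    -- key bounds on s
    have hks : |(k : ℝ)| * s ≤ lam / 2 := by
      have h1 : s ≤ lam / (2 * (|(k : ℝ)| + 1)) :=
        hs.2.trans (le_trans (min_le_right _ _) (min_le_left _ _))
      have h2 : |(k : ℝ)| * s ≤ |(k : ℝ)| * (lam / (2 * (|(k : ℝ)| + 1))) :=
        mul_le_mul_of_nonneg_left h1 (abs_nonneg _)
      refine h2.trans ?_
      rw [← mul_div_assoc, div_le_div_iff₀ (by positivity) two_pos]
      nlinarith [abs_nonneg (k : ℝ)]
    have hssq : s ^ 2 ≤ lam * Real.cos 1 / 2 := by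
      have h1 : s ≤ Real.sqrt (lam * Real.cos 1 / 2) :=
        hs.2.trans (le_trans (min_le_right _ _) (min_le_right _ _))
      have h2 : s ^ 2 ≤ Real.sqrt (lam * Real.cos 1 / 2) ^ 2 :=
        pow_le_pow_left₀ hs0.le h1 2
      rwa [Real.sq_sqrt (by positivity)] at h2
    -- numerator estimate
    have hkey : 1 ≤ (lam / s ^ 2 - (k : ℝ) / s) * Real.cos (Ω s) := by
      have hs2 : (0:ℝ) < s ^ 2 := by positivity
      have heq : lam / s ^ 2 - (k : ℝ) / s = (lam - (k : ℝ) * s) / s ^ 2 := by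
        field_simp
      rw [heq, div_mul_eq_mul_div, le_div_iff₀ hs2, one_mul]
      have hks' : (k : ℝ) * s ≤ lam / 2 :=
        le_trans (mul_le_mul_of_nonneg_right (le_abs_self _) hs0.le) hks
      have h3 : lam / 2 ≤ lam - (k : ℝ) * s := by linarith
      have h4 : (lam / 2) * Real.cos 1 ≤ (lam - (k : ℝ) * s) * Real.cos (Ω s) :=
        mul_le_mul h3 hcosge hc1.le (by linarith)
      nlinarith
    have hnum : 0 ≤ Real.sin (Ω s) + (lam / s ^ 2 - (k : ℝ) / s) * Real.cos (Ω s) := by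
      linarith
    have : g s = (Real.sin (Ω s) + (lam / s ^ 2 - (k : ℝ) / s) * Real.cos (Ω s)) / f s := by
      simp only [hgdef]
      rw [mul_div_assoc, add_div, mul_div_assoc]
    rw [this]
    positivity
  -- the primitive F
  set F : ℝ → ℝ := fun r => ∫ s in r..r₀, g s with hFdef
  -- bound on [δ, r₀]
  obtain ⟨M, hM⟩ := (isCompact_Icc : IsCompact (Icc δ r₀)).exists_bound_of_continuousOn
    (hgconIcc δ hδpos)
  have hM0 : 0 ≤ M := le_trans (norm_nonneg _) (hM δ ⟨le_refl δ, hδr₀⟩)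
  set B : ℝ := M * (r₀ - δ) with hBdef
  have hB0 : 0 ≤ B := mul_nonneg hM0 (by linarith)
  have hFmid : ∀ r, δ ≤ r → r ≤ r₀ → -B ≤ F r := by
    intro r hδr hrr₀
    have h1 : ‖∫ s in r..r₀, g s‖ ≤ M * |r₀ - r| := by
      apply intervalIntegral.norm_integral_le_of_norm_le_const
      intro x hx
      rw [uIoc_of_le hrr₀] at hx
      exact hM x ⟨le_trans hδr hx.1.le, hx.2⟩
    have h2 : |F r| ≤ M * |r₀ - r| := h1
    have h3 : M * |r₀ - r| ≤ B := by
      rw [abs_of_nonneg (by linarith)]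
      exact mul_le_mul_of_nonneg_left (by linarith) hM0
    have := abs_le.1 h2
    linarith
  have hFlb : ∀ r ∈ Ioc (0 : ℝ) r₀, -B ≤ F r := by
    intro r hr
    rcases le_or_gt δ r with h | h
    · exact hFmid r h hr.2
    · have hsplit : (∫ s in r..δ, g s) + (∫ s in δ..r₀, g s) = F r :=
        intervalIntegral.integral_add_adjacent_intervals
          (hgint r δ hr.1 h.le hδr₀) (hgint δ r₀ hδpos hδr₀ le_rfl)
      have h1 : 0 ≤ ∫ s in r..δ, g s := by
        apply intervalIntegral.integral_nonneg h.le
        intro u hu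
        exact hgnn u ⟨lt_of_lt_of_le hr.1 hu.1, hu.2⟩
      have h2 : -B ≤ ∫ s in δ..r₀, g s := hFmid δ le_rfl hδr₀
      have : F δ = ∫ s in δ..r₀, g s := rfl
      linarith
  -- pointwise bound for the integrand
  set C : ℝ := Real.exp (2 * B) / ((Zs ^ 2 - As ^ 2) / r₀ ^ 2) with hCdef
  have hbound : ∀ r ∈ Ioc (0 : ℝ) r₀, ‖R r ^ 2 / f r ^ 2‖ ≤ C := by
    intro r hr
    have hf2 : 0 < f r ^ 2 := pow_pos (hfpos r hr.1) 2
    have hRval : R r = Real.exp (-F r) := hR r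
    have h1 : R r ^ 2 = Real.exp (2 * (-F r)) := by
      rw [hRval, sq, ← Real.exp_add]; congr 1; ring
    have h2 : R r ^ 2 ≤ Real.exp (2 * B) := by
      rw [h1]; apply Real.exp_le_exp.2
      have := hFlb r hr; linarith
    have h3 : (Zs ^ 2 - As ^ 2) / r₀ ^ 2 ≤ f r ^ 2 := hflb r hr
    have h4 : (0:ℝ) < (Zs ^ 2 - As ^ 2) / r₀ ^ 2 := by positivity
    rw [Real.norm_eq_abs, abs_of_nonneg (by positivity)]
    exact div_le_div₀ (Real.exp_nonneg _) h2 h4 h3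
  -- continuity of F on Ioc 0 r₀
  have hFcont : ContinuousOn F (Ioc 0 r₀) := by
    intro r hr
    have hc : 0 < r / 2 := by linarith [hr.1]
    have hcr₀ : r / 2 ≤ r₀ := by linarith [hr.2, hr.1]
    have hint : IntegrableOn g (uIcc (r / 2) r₀) volume := by
      rw [uIcc_of_le hcr₀]
      exact (hgconIcc (r/2) hc).integrableOn_compact isCompact_Icc
    have hprim : ContinuousOn F (uIcc (r / 2) r₀) :=
      intervalIntegral.continuousOn_primitive_interval_left hint
    have hrmem : r ∈ uIcc (r / 2) r₀ := by
      rw [uIcc_of_le hcr₀]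
      exact ⟨by linarith [hr.1], hr.2⟩
    have hcwa : ContinuousWithinAt F (uIcc (r / 2) r₀) r := hprim r hrmem
    apply hcwa.mono_of_mem_nhdsWithin
    rw [mem_nhdsWithin]
    refine ⟨Ioi (r / 2), isOpen_Ioi, by simpa using (by linarith [hr.1] : r / 2 < r), ?_⟩
    intro x hx
    rw [uIcc_of_le hcr₀]
    exact ⟨le_of_lt hx.1, hx.2.2⟩
  -- continuity (hence measurability) of the integrand on Ioc 0 r₀
  have hRcont : ContinuousOn (fun r => R r ^ 2 / f r ^ 2) (Ioc 0 r₀) := by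
    have h1 : ContinuousOn (fun r => Real.exp (-F r) ^ 2 / f r ^ 2) (Ioc 0 r₀) := by
      apply ContinuousOn.div
      · exact ((Real.continuous_exp.comp_continuousOn hFcont.neg).pow 2)
      · apply ContinuousOn.pow
        intro x hx
        exact (hfcont x hx.1).continuousWithinAt
      · intro x hx
        exact pow_ne_zero 2 (hfpos x hx.1).ne'
    apply h1.congr
    intro x hx
    show R x ^ 2 / f x ^ 2 = Real.exp (-F x) ^ 2 / f x ^ 2
    rw [hR x]
  -- conclude
  have hmeas : AEStronglyMeasurable (fun r => R r ^ 2 / f r ^ 2)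
      (volume.restrict (Ioc (0:ℝ) r₀)) :=
    hRcont.aestronglyMeasurable measurableSet_Ioc
  refine ⟨hmeas, MeasureTheory.HasFiniteIntegral.restrict_of_bounded (C := C) ?_ ?_⟩
  · rw [Real.volume_Ioc]; exact ENNReal.ofReal_lt_top
  · rw [ae_restrict_iff' measurableSet_Ioc]
    exact ae_of_all _ hbound
end

section
/- Let Z_* > 0, A_* ∈ [0, Z_*), λ, γ ∈ ℝ, ε ∈ (−1,1), and let k be a nonzero integer. Let f(r) := sqrt(1 − 2A_*/r + Z_*^2/r^2) for r > 0. Let r₁ > 0 and let Ω : [r₁, ∞) → ℝ be differentiable and satisfy the Prüfer angle equation Ω'(r) = (2/f(r))·cos Ω(r) + (2/f(r))·(k/r − λ/r^2)·sin Ω(r) + (2/f(r)^2)·(γ/r − ε), and suppose lim_{r→∞} Ω(r) = −arccos ε + 2πm for some integer m (the orbit ends at the saddle S^+_ε). Define R(r) := exp( ∫_{r₁}^{r} [ sin Ω(s)/f(s) + (λ/s^2 − k/s)·cos Ω(s)/f(s) ] ds ). Then ∫_{r₁}^{∞} R(r)^2 / f(r)^2 dr < ∞. -/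
open Real Set Filter MeasureTheory intervalIntegral

/-- A Prüfer orbit ending at the saddle `S⁺_ε` (i.e. `Ω → −arccos ε mod 2π`
as `r → ∞`) has square-integrable amplitude near `r = ∞`. -/
theorem rwn_L2_near_infty_saddle (Zs As lam γ ε : ℝ) (k : ℤ)
    (hZ : 0 < Zs) (hAs : As ∈ Set.Ico (0 : ℝ) Zs) (hε : ε ∈ Set.Ioo (-1 : ℝ) 1)
    (hk : k ≠ 0)
    (f : ℝ → ℝ) (hf : ∀ r, f r = Real.sqrt (1 - 2 * As / r + Zs ^ 2 / r ^ 2))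
    (r₁ : ℝ) (hr₁ : 0 < r₁) (Ω : ℝ → ℝ)
    (hΩ : ∀ r ∈ Set.Ici r₁, HasDerivAt Ω
      ((2 / f r) * Real.cos (Ω r)
        + (2 / f r) * ((k : ℝ) / r - lam / r ^ 2) * Real.sin (Ω r)
        + (2 / (f r) ^ 2) * (γ / r - ε)) r)
    (m : ℤ)
    (hlim : Filter.Tendsto Ω Filter.atTop
      (nhds (-Real.arccos ε + 2 * Real.pi * (m : ℝ))))
    (R : ℝ → ℝ)
    (hR : ∀ r, R r = Real.exp (∫ s in r₁..r,
      (Real.sin (Ω s) / f s + (lam / s ^ 2 - (k : ℝ) / s) * Real.cos (Ω s) / f s))) :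
    MeasureTheory.IntegrableOn (fun r => (R r) ^ 2 / (f r) ^ 2) (Set.Ici r₁) := by
  obtain ⟨hA0, hAZ⟩ := hAs
  obtain ⟨hε1, hε2⟩ := hε
  -- uniform lower bound for f
  set c₀ : ℝ := Real.sqrt (1 - As ^ 2 / Zs ^ 2) with hc₀def
  have hZ2 : (0:ℝ) < Zs ^ 2 := by positivity
  have hc₀pos : 0 < c₀ := by
    apply Real.sqrt_pos.2
    rw [sub_pos, div_lt_one hZ2]
    nlinarith
  have hflb : ∀ r : ℝ, 0 < r → c₀ ≤ f r := by
    intro r hr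
    rw [hf r]
    apply Real.sqrt_le_sqrt
    have hr0 : r ≠ 0 := ne_of_gt hr
    have hZ0 : Zs ≠ 0 := ne_of_gt hZ
    have key : (0:ℝ) ≤ (Zs / r - As / Zs) ^ 2 := sq_nonneg _
    have heq : (Zs / r - As / Zs) ^ 2 = Zs ^ 2 / r ^ 2 - 2 * As / r + As ^ 2 / Zs ^ 2 := by
      field_simp; ring
    nlinarith [heq ▸ key]
  have hfpos : ∀ r : ℝ, 0 < r → 0 < f r := fun r hr => lt_of_lt_of_le hc₀pos (hflb r hr)
  -- continuity of f on Ici r₁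
  have hfeq : f = fun r => Real.sqrt (1 - 2 * As / r + Zs ^ 2 / r ^ 2) := funext hf
  have hfc : ContinuousOn f (Set.Ici r₁) := by
    rw [hfeq]
    apply ContinuousOn.sqrt
    intro s hs
    have hs0 : s ≠ 0 := ne_of_gt (lt_of_lt_of_le hr₁ hs)
    exact ((continuousAt_const.sub (continuousAt_const.div continuousAt_id hs0)).add
      (continuousAt_const.div (continuousAt_id.pow 2) (pow_ne_zero 2 hs0))).continuousWithinAt
  -- f tends to 1 at infinity
  have hinv : Tendsto (fun r : ℝ => r⁻¹) atTop (nhds 0) := tendsto_inv_atTop_zero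
  have hf1 : Tendsto f atTop (nhds 1) := by
    have h0 : Tendsto (fun r : ℝ => 1 - 2 * As / r + Zs ^ 2 / r ^ 2) atTop (nhds 1) := by
      have : Tendsto (fun r : ℝ => 1 - 2 * As * r⁻¹ + Zs ^ 2 * (r⁻¹) ^ 2) atTop
          (nhds (1 - 2 * As * 0 + Zs ^ 2 * 0 ^ 2)) :=
        (tendsto_const_nhds.sub (hinv.const_mul _)).add ((hinv.pow 2).const_mul _)
      simpa [div_eq_mul_inv, div_pow, mul_pow] using this
    have := (Real.continuous_sqrt.tendsto 1).comp h0
    rw [Real.sqrt_one] at this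
    rw [hfeq]
    exact this
  -- continuity of Ω on Ici r₁
  have hΩc : ContinuousOn Ω (Set.Ici r₁) := fun r hr => ((hΩ r hr).continuousAt).continuousWithinAt
  -- limits of sin Ω and cos Ω
  set δ : ℝ := Real.sqrt (1 - ε ^ 2) with hδdef
  have hδpos : 0 < δ := by
    apply Real.sqrt_pos.2; nlinarith
  have hsval : Real.sin (-Real.arccos ε + 2 * Real.pi * (m : ℝ)) = -δ := by
    have h1 : -Real.arccos ε + 2 * Real.pi * (m : ℝ) = -Real.arccos ε + (m : ℝ) * (2 * Real.pi) := by ring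
    rw [h1, Real.sin_add_int_mul_two_pi, Real.sin_neg, Real.sin_arccos]
  have hcval : Real.cos (-Real.arccos ε + 2 * Real.pi * (m : ℝ)) = ε := by
    have h1 : -Real.arccos ε + 2 * Real.pi * (m : ℝ) = -Real.arccos ε + (m : ℝ) * (2 * Real.pi) := by ring
    rw [h1, Real.cos_add_int_mul_two_pi, Real.cos_neg, Real.cos_arccos hε1.le hε2.le]
  have hsin : Tendsto (fun r => Real.sin (Ω r)) atTop (nhds (-δ)) := by
    have := (Real.continuous_sin.tendsto _).comp hlim
    rwa [hsval] at this
  have hcos : Tendsto (fun r => Real.cos (Ω r)) atTop (nhds ε) := by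
    have := (Real.continuous_cos.tendsto _).comp hlim
    rwa [hcval] at this
  -- the exponent integrand
  set h : ℝ → ℝ := fun s => Real.sin (Ω s) / f s + (lam / s ^ 2 - (k : ℝ) / s) * Real.cos (Ω s) / f s with hhdef
  have hcoef : Tendsto (fun s : ℝ => lam / s ^ 2 - (k : ℝ) / s) atTop (nhds 0) := by
    have : Tendsto (fun s : ℝ => lam * (s⁻¹) ^ 2 - (k : ℝ) * s⁻¹) atTop
        (nhds (lam * 0 ^ 2 - (k : ℝ) * 0)) := ((hinv.pow 2).const_mul _).sub (hinv.const_mul _)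
    simpa [div_eq_mul_inv, div_pow] using this
  have hh : Tendsto h atTop (nhds (-δ)) := by
    have h1 : Tendsto h atTop (nhds (-δ / 1 + 0 * ε / 1)) :=
      (hsin.div hf1 one_ne_zero).add ((hcoef.mul hcos).div hf1 one_ne_zero)
    simpa using h1
  -- eventually h ≤ -δ/2
  have hev : ∀ᶠ s in atTop, h s < -δ / 2 := hh.eventually_lt_const (by linarith)
  obtain ⟨r₂', hr₂'⟩ := eventually_atTop.1 hev
  set r₂ : ℝ := max r₁ r₂' with hr₂def
  have hr₁₂ : r₁ ≤ r₂ := le_max_left _ _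
  have hhle : ∀ s, r₂ ≤ s → h s ≤ -δ / 2 := fun s hs =>
    (hr₂' s (le_trans (le_max_right _ _) hs)).le
  -- continuity of h on Ici r₁
  have hhc : ContinuousOn h (Set.Ici r₁) := by
    apply ContinuousOn.add
    · exact (Real.continuous_sin.comp_continuousOn hΩc).div hfc
        (fun s hs => ne_of_gt (hfpos s (lt_of_lt_of_le hr₁ hs)))
    · apply ContinuousOn.div _ hfc (fun s hs => ne_of_gt (hfpos s (lt_of_lt_of_le hr₁ hs)))
      apply ContinuousOn.mul _ (Real.continuous_cos.comp_continuousOn hΩc)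
      intro s hs
      have hs0 : s ≠ 0 := ne_of_gt (lt_of_lt_of_le hr₁ hs)
      exact ((continuousAt_const.div (continuousAt_id.pow 2) (pow_ne_zero 2 hs0)).sub
        (continuousAt_const.div continuousAt_id hs0)).continuousWithinAt
  -- the truncated integrand, continuous on all of ℝ
  set g : ℝ → ℝ := fun s => h (max s r₁) with hgdef
  have hgc : Continuous g :=
    hhc.comp_continuous (continuous_id.max continuous_const) (fun x => Set.mem_Ici.2 (le_max_right _ _))
  have hgh : ∀ s, r₁ ≤ s → g s = h s := fun s hs => by simp [hgdef, max_eq_left hs]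
  have hgint : ∀ a b : ℝ, IntervalIntegrable g volume a b := fun a b =>
    hgc.intervalIntegrable a b
  -- primitive
  set F : ℝ → ℝ := fun r => ∫ s in r₁..r, g s with hFdef
  have hFc : Continuous F := intervalIntegral.continuous_primitive hgint r₁
  have hRF : ∀ r, r₁ ≤ r → R r = Real.exp (F r) := by
    intro r hr
    rw [hR r, hFdef]
    congr 1
    apply intervalIntegral.integral_congr
    intro s hs
    rw [Set.uIcc_of_le hr] at hs
    exact (hgh s (hs.1)).symm
  -- bound on F for r ≥ r₂
  have hFbound : ∀ r, r₂ ≤ r → F r ≤ F r₂ + (-δ / 2) * (r - r₂) := by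
    intro r hr
    have hsplit : (∫ s in r₁..r₂, g s) + (∫ s in r₂..r, g s) = ∫ s in r₁..r, g s :=
      intervalIntegral.integral_add_adjacent_intervals (hgint _ _) (hgint _ _)
    have hmono : (∫ s in r₂..r, g s) ≤ ∫ s in r₂..r, (-δ / 2 : ℝ) := by
      apply intervalIntegral.integral_mono_on hr (hgint _ _)
        (intervalIntegrable_const)
      intro s hs
      rw [hgh s (le_trans hr₁₂ hs.1)]
      exact hhle s hs.1
    rw [intervalIntegral.integral_const, smul_eq_mul] at hmono
    have : F r = F r₂ + ∫ s in r₂..r, g s := by rw [hFdef]; simp only []; linarith [hsplit]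
    rw [this]
    nlinarith [hmono]
  -- continuity of the full integrand on Ici r₁
  have hRc : ContinuousOn R (Set.Ici r₁) := by
    apply ContinuousOn.congr (Real.continuous_exp.comp hFc).continuousOn
    intro r hr
    exact hRF r hr
  have hIc : ContinuousOn (fun r => (R r) ^ 2 / (f r) ^ 2) (Set.Ici r₁) :=
    (hRc.pow 2).div (hfc.pow 2)
      (fun s hs => pow_ne_zero 2 (ne_of_gt (hfpos s (lt_of_lt_of_le hr₁ hs))))
  -- split the domain
  rw [← Set.Icc_union_Ioi_eq_Ici hr₁₂]
  apply MeasureTheory.IntegrableOn.union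
  · exact (hIc.mono (Set.Icc_subset_Ici_self)).integrableOn_Icc
  · -- exponential domination on Ioi r₂
    set K : ℝ := Real.exp (2 * F r₂ + δ * r₂) / c₀ ^ 2 with hKdef
    apply MeasureTheory.Integrable.mono'
      (g := fun r => K * Real.exp (-δ * r))
    · exact ((exp_neg_integrableOn_Ioi r₂ hδpos).const_mul K)
    · exact (hIc.mono (fun x hx => le_trans hr₁₂ hx.le)).aestronglyMeasurable measurableSet_Ioi
    · rw [ae_restrict_iff' measurableSet_Ioi]
      apply Filter.Eventually.of_forall
      intro r hr
      have hrr₂ : r₂ ≤ r := hr.le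
      have hrr₁ : r₁ ≤ r := le_trans hr₁₂ hrr₂
      have hrpos : 0 < r := lt_of_lt_of_le hr₁ hrr₁
      have hfr : 0 < f r := hfpos r hrpos
      have hRr : R r = Real.exp (F r) := hRF r hrr₁
      have hnonneg : 0 ≤ (R r) ^ 2 / (f r) ^ 2 := by positivity
      rw [Real.norm_eq_abs, abs_of_nonneg hnonneg]
      have h1 : (R r) ^ 2 = Real.exp (2 * F r) := by
        rw [hRr, sq, ← Real.exp_add, two_mul]
      have h2 : (R r) ^ 2 ≤ Real.exp (2 * F r₂ + δ * r₂ + (-δ * r)) := by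
        rw [h1]
        apply Real.exp_le_exp.2
        have := hFbound r hrr₂
        nlinarith
      have h3 : c₀ ^ 2 ≤ (f r) ^ 2 := by
        have := hflb r hrpos
        nlinarith [hc₀pos]
      calc (R r) ^ 2 / (f r) ^ 2 ≤ Real.exp (2 * F r₂ + δ * r₂ + (-δ * r)) / c₀ ^ 2 := by
            apply div_le_div₀ (Real.exp_pos _).le h2 (by positivity) h3
        _ = K * Real.exp (-δ * r) := by
            rw [hKdef, Real.exp_add]; ring
end

section
/- Let Z_* > 0, A_* ∈ [0, Z_*), λ, γ ∈ ℝ, ε ∈ (−1,1), and let k be a nonzero integer. Let f(r) := sqrt(1 − 2A_*/r + Z_*^2/r^2) for r > 0. Let r₁ > 0 and let Ω : [r₁, ∞) → ℝ be differentiable and satisfy the Prüfer angle equation Ω'(r) = (2/f(r))·cos Ω(r) + (2/f(r))·(k/r − λ/r^2)·sin Ω(r) + (2/f(r)^2)·(γ/r − ε), and suppose lim_{r→∞} Ω(r) = arccos ε + 2πm for some integer m (the orbit ends at the node N^+_ε). Define R(r) := exp( ∫_{r₁}^{r} [ sin Ω(s)/f(s) + (λ/s^2 − k/s)·cos Ω(s)/f(s)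 ] ds ). Then ∫_{r₁}^{∞} R(r)^2 / f(r)^2 dr = ∞. -/
/-- A Prüfer orbit ending at the node `N⁺_ε` (i.e. `Ω → arccos ε mod 2π`
as `r → ∞`) is never square integrable near `r = ∞`. -/
theorem rwn_not_L2_near_infty_node (Zs As lam γ ε : ℝ) (k : ℤ)
    (hZ : 0 < Zs) (hAs : As ∈ Set.Ico (0 : ℝ) Zs) (hε : ε ∈ Set.Ioo (-1 : ℝ) 1)
    (hk : k ≠ 0)
    (f : ℝ → ℝ) (hf : ∀ r, f r = Real.sqrt (1 - 2 * As / r + Zs ^ 2 / r ^ 2))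
    (r₁ : ℝ) (hr₁ : 0 < r₁) (Ω : ℝ → ℝ)
    (hΩ : ∀ r ∈ Set.Ici r₁, HasDerivAt Ω
      ((2 / f r) * Real.cos (Ω r)
        + (2 / f r) * ((k : ℝ) / r - lam / r ^ 2) * Real.sin (Ω r)
        + (2 / (f r) ^ 2) * (γ / r - ε)) r)
    (m : ℤ)
    (hlim : Filter.Tendsto Ω Filter.atTop
      (nhds (Real.arccos ε + 2 * Real.pi * (m : ℝ))))
    (R : ℝ → ℝ)
    (hR : ∀ r, R r = Real.exp (∫ s in r₁..r,
      (Real.sin (Ω s) / f s + (lam / s ^ 2 - (k : ℝ) / s) * Real.cos (Ω s) / f s))) :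
    ¬ MeasureTheory.IntegrableOn (fun r => (R r) ^ 2 / (f r) ^ 2) (Set.Ici r₁) := by
  obtain ⟨hA0, hAZ⟩ := hAs
  obtain ⟨hε1, hε2⟩ := hε
  set θ := Real.arccos ε + 2 * Real.pi * (m : ℝ) with hθ
  set L := Real.sqrt (1 - ε ^ 2) with hL
  have hLpos : 0 < L := Real.sqrt_pos.mpr (by nlinarith)
  -- positivity of f on (0, ∞)
  have hfpos : ∀ r : ℝ, 0 < r → 0 < f r := by
    intro r hr
    rw [hf]
    apply Real.sqrt_pos.mpr
    have h1 : 1 - 2 * As / r + Zs ^ 2 / r ^ 2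
        = ((r - As) ^ 2 + (Zs ^ 2 - As ^ 2)) / r ^ 2 := by
      field_simp; ring
    rw [h1]
    exact div_pos (by nlinarith) (by positivity)
  -- f → 1 at infinity
  have hf1 : Filter.Tendsto f Filter.atTop (nhds 1) := by
    have h1 : Filter.Tendsto (fun r : ℝ => 2 * As / r) Filter.atTop (nhds 0) :=
      Filter.Tendsto.div_atTop tendsto_const_nhds Filter.tendsto_id
    have h2 : Filter.Tendsto (fun r : ℝ => Zs ^ 2 / r ^ 2) Filter.atTop (nhds 0) :=
      Filter.Tendsto.div_atTop tendsto_const_nhds (Filter.tendsto_pow_atTop (by norm_num))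
    have h0 : Filter.Tendsto (fun r : ℝ => 1 - 2 * As / r + Zs ^ 2 / r ^ 2)
        Filter.atTop (nhds 1) := by
      simpa using (tendsto_const_nhds.sub h1).add h2
    have h3 := (Real.continuous_sqrt.tendsto 1).comp h0
    rw [Real.sqrt_one] at h3
    exact (funext hf : f = _) ▸ h3
  -- the exponent integrand
  set h : ℝ → ℝ := fun s =>
    Real.sin (Ω s) / f s + (lam / s ^ 2 - (k : ℝ) / s) * Real.cos (Ω s) / f s with hh
  -- h is continuous on [r₁, ∞)
  have hΩc : ContinuousOn Ω (Set.Ici r₁) := fun r hr =>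
    (hΩ r hr).continuousAt.continuousWithinAt
  have hne : ∀ r ∈ Set.Ici r₁, r ≠ 0 := fun r hr =>
    ne_of_gt (lt_of_lt_of_le hr₁ hr)
  have hfc : ContinuousOn f (Set.Ici r₁) := by
    have : ContinuousOn (fun r : ℝ => Real.sqrt (1 - 2 * As / r + Zs ^ 2 / r ^ 2))
        (Set.Ici r₁) := by
      apply Real.continuous_sqrt.comp_continuousOn
      exact ((continuousOn_const.sub (continuousOn_const.div continuousOn_id hne)).add
        (continuousOn_const.div (continuousOn_id.pow 2)
          (fun r hr => pow_ne_zero 2 (hne r hr))))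
    exact (funext hf : f = _) ▸ this
  have hfne : ∀ r ∈ Set.Ici r₁, f r ≠ 0 := fun r hr =>
    ne_of_gt (hfpos r (lt_of_lt_of_le hr₁ hr))
  have hhc : ContinuousOn h (Set.Ici r₁) := by
    apply ContinuousOn.add
    · exact (Real.continuous_sin.comp_continuousOn hΩc).div hfc hfne
    · apply ContinuousOn.div _ hfc hfne
      exact ((continuousOn_const.div (continuousOn_id.pow 2)
        (fun r hr => pow_ne_zero 2 (hne r hr))).sub
        (continuousOn_const.div continuousOn_id hne)).mul
        (Real.continuous_cos.comp_continuousOn hΩc)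
  -- h tends to L > 0 at infinity
  have hsinθ : Real.sin θ = L := by
    rw [hθ, hL]
    have : Real.arccos ε + 2 * Real.pi * (m : ℝ)
        = Real.arccos ε + (m : ℝ) * (2 * Real.pi) := by ring
    rw [this, Real.sin_add_int_mul_two_pi, Real.sin_arccos]
  have hht : Filter.Tendsto h Filter.atTop (nhds L) := by
    have hsin : Filter.Tendsto (fun s => Real.sin (Ω s)) Filter.atTop (nhds L) := by
      have := (Real.continuous_sin.tendsto θ).comp hlim
      rwa [hsinθ] at this
    have hcos : Filter.Tendsto (fun s => Real.cos (Ω s)) Filter.atTop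
        (nhds (Real.cos θ)) := (Real.continuous_cos.tendsto θ).comp hlim
    have hcoef : Filter.Tendsto (fun s : ℝ => lam / s ^ 2 - (k : ℝ) / s)
        Filter.atTop (nhds 0) := by
      have h1 : Filter.Tendsto (fun s : ℝ => lam / s ^ 2) Filter.atTop (nhds 0) :=
        Filter.Tendsto.div_atTop tendsto_const_nhds (Filter.tendsto_pow_atTop (by norm_num))
      have h2 : Filter.Tendsto (fun s : ℝ => (k : ℝ) / s) Filter.atTop (nhds 0) :=
        Filter.Tendsto.div_atTop tendsto_const_nhds Filter.tendsto_id
      simpa using h1.sub h2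
    have hterm1 : Filter.Tendsto (fun s => Real.sin (Ω s) / f s) Filter.atTop (nhds L) := by
      simpa [Pi.div_def] using hsin.div hf1 one_ne_zero
    have hterm2 : Filter.Tendsto
        (fun s => (lam / s ^ 2 - (k : ℝ) / s) * Real.cos (Ω s) / f s)
        Filter.atTop (nhds 0) := by
      have := (hcoef.mul hcos).div hf1 one_ne_zero
      simpa [Pi.div_def] using this
    simpa using hterm1.add hterm2
  -- choose r₂ beyond which h ≥ L/2 and f < 2
  have hev : ∀ᶠ s in Filter.atTop, L / 2 ≤ h s ∧ f s < 2 := by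
    filter_upwards [hht.eventually (eventually_ge_nhds (by linarith : L / 2 < L)),
      hf1.eventually (eventually_lt_nhds (by norm_num : (1 : ℝ) < 2))] with s h1 h2
    exact ⟨h1, h2⟩
  obtain ⟨r₀, hr₀⟩ := Filter.eventually_atTop.mp hev
  set r₂ := max r₀ r₁ with hr₂def
  have hr₁₂ : r₁ ≤ r₂ := le_max_right _ _
  have hbig : ∀ s, r₂ ≤ s → L / 2 ≤ h s ∧ f s < 2 := fun s hs =>
    hr₀ s (le_trans (le_max_left _ _) hs)
  -- interval integrability of h
  have hintgr : ∀ a b : ℝ, r₁ ≤ a → a ≤ b → IntervalIntegrable h MeasureTheory.volume a b := by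
    intro a b ha hab
    apply ContinuousOn.intervalIntegrable
    apply hhc.mono
    rw [Set.uIcc_of_le hab]
    exact fun x hx => le_trans ha hx.1
  -- lower bound R r ≥ exp (∫ r₁..r₂ h) for r ≥ r₂
  set c := Real.exp (∫ s in r₁..r₂, h s) with hc
  have hRlb : ∀ r, r₂ ≤ r → c ≤ R r := by
    intro r hr
    rw [hR]
    apply Real.exp_le_exp.mpr
    have hsplit := intervalIntegral.integral_add_adjacent_intervals
      (hintgr r₁ r₂ le_rfl hr₁₂) (hintgr r₂ r hr₁₂ hr)
    have hnn : 0 ≤ ∫ s in r₂..r, h s := by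
      apply intervalIntegral.integral_nonneg hr
      intro u hu
      exact le_trans (le_of_lt (by positivity)) ((hbig u hu.1).1)
    calc (∫ s in r₁..r₂, h s) ≤ (∫ s in r₁..r₂, h s) + ∫ s in r₂..r, h s := by linarith
      _ = ∫ s in r₁..r, h s := hsplit
  have hcpos : 0 < c := Real.exp_pos _
  -- lower bound for the integrand on [r₂, ∞)
  have hbound : ∀ r ∈ Set.Ici r₂, c ^ 2 / 4 ≤ (R r) ^ 2 / (f r) ^ 2 := by
    intro r hr
    have hfr : 0 < f r := hfpos r (lt_of_lt_of_le hr₁ (le_trans hr₁₂ hr))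
    have hR2 : c ^ 2 ≤ (R r) ^ 2 := by
      have := hRlb r hr
      nlinarith
    have hf2 : (f r) ^ 2 ≤ 4 := by nlinarith [(hbig r hr).2]
    exact div_le_div₀ (by positivity) hR2 (by positivity) hf2
  -- contradiction with integrability
  intro hInt
  have hInt2 : MeasureTheory.IntegrableOn (fun r => (R r) ^ 2 / (f r) ^ 2) (Set.Ici r₂) :=
    hInt.mono_set (Set.Ici_subset_Ici.mpr hr₁₂)
  have hconst : MeasureTheory.Integrable (fun _ : ℝ => c ^ 2 / 4)
      (MeasureTheory.volume.restrict (Set.Ici r₂)) := by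
    apply MeasureTheory.Integrable.mono' hInt2 MeasureTheory.aestronglyMeasurable_const
    rw [MeasureTheory.ae_restrict_iff' measurableSet_Ici]
    filter_upwards with r hr
    rw [Real.norm_eq_abs, abs_of_pos (by positivity)]
    exact hbound r hr
  rw [MeasureTheory.integrable_const_iff] at hconst
  rcases hconst with h0 | hfin
  · exact absurd h0 (by positivity)
  · rw [MeasureTheory.isFiniteMeasure_restrict, Real.volume_Ici, ← lt_top_iff_ne_top] at hfin
    exact lt_irrefl _ hfin
end

section
/- Let 𝒢 ∈ (0, 1], let γ < 0, set Z_* := −√𝒢 · γ, let A_* ∈ [0, Z_*), and let ε ∈ [−1, 1]. Then for every η ∈ (0,1): −2η^2/g(η) + (2η^2/g(η)^2)·(γ(1−η) − εη) < 0; equivalently, γ(1−η) − εη < g(η). (This is the statement that the compactified Prüfer vector field points strictly downward along the horizontal line Ω = π, which forces the winding number to satisfy w_ε ≥ 0.) -/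
/-- The compactified Prüfer vector field points strictly downward along the
horizontal line `Ω = π`, which forces the winding number to satisfy `w_ε ≥ 0`. -/
theorem rwn_upper_barrier (G γ : ℝ) (hG : G ∈ Set.Ioc (0 : ℝ) 1) (hγ : γ < 0)
    (Zs : ℝ) (hZs : Zs = -Real.sqrt G * γ)
    (As : ℝ) (hAs : As ∈ Set.Ico (0 : ℝ) Zs)
    (ε : ℝ) (hε : ε ∈ Set.Icc (-1 : ℝ) 1)
    (g : ℝ → ℝ)
    (hg : ∀ η, g η =
      Real.sqrt ((1 + 2 * As + Zs ^ 2) * η ^ 2 - 2 * (As + Zs ^ 2) * η + Zs ^ 2))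
    (η : ℝ) (hη : η ∈ Set.Ioo (0 : ℝ) 1) :
    -(2 * η ^ 2) / g η + (2 * η ^ 2 / (g η) ^ 2) * (γ * (1 - η) - ε * η) < 0 ∧
      γ * (1 - η) - ε * η < g η := by
  obtain ⟨hη1, hη2⟩ := hη
  obtain ⟨hA1, hA2⟩ := hAs
  obtain ⟨hG1, hG2⟩ := hG
  obtain ⟨hε1, hε2⟩ := hε
  have hZpos : 0 < Zs := lt_of_le_of_lt hA1 hA2
  have hsG : Real.sqrt G ≤ 1 := Real.sqrt_le_one.mpr hG2
  have hZle : Zs ≤ -γ := by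
    rw [hZs]; nlinarith [Real.sqrt_nonneg G]
  set q : ℝ := (1 + 2 * As + Zs ^ 2) * η ^ 2 - 2 * (As + Zs ^ 2) * η + Zs ^ 2 with hqdef
  have hqpos : 0 < q := by
    have h1 : 0 < 2 * η * (1 - η) * (Zs - As) := by nlinarith [mul_pos (mul_pos hη1 (by linarith : (0:ℝ) < 1 - η)) (by linarith : (0:ℝ) < Zs - As)]
    nlinarith [sq_nonneg (η - Zs * (1 - η))]
  have hgpos : 0 < g η := by rw [hg]; exact Real.sqrt_pos.mpr hqpos
  have hgsq : (g η) ^ 2 = q := by rw [hg]; exact Real.sq_sqrt hqpos.le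
  have key : γ * (1 - η) - ε * η < g η := by
    nlinarith [hgpos, hgsq, mul_nonneg (by linarith : (0:ℝ) ≤ -γ - Zs) (by linarith : (0:ℝ) ≤ 1 - η),
      mul_nonneg (by linarith : (0:ℝ) ≤ 1 + ε) hη1.le,
      mul_pos (mul_pos hη1 (by linarith : (0:ℝ) < 1 - η)) (by linarith : (0:ℝ) < Zs - As),
      mul_pos hgpos (by nlinarith [sq_nonneg (g η + (η - Zs * (1 - η)))] : (0:ℝ) < g η)]
  refine ⟨?_, key⟩
  have heq : -(2 * η ^ 2) / g η + (2 * η ^ 2 / (g η) ^ 2) * (γ * (1 - η) - ε * η)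
      = (2 * η ^ 2 / (g η) ^ 2) * ((γ * (1 - η) - ε * η) - g η) := by
    field_simp
    ring
  rw [heq]
  apply mul_neg_of_pos_of_neg
  · positivity
  · linarith
end

section
/- Let γ ∈ [−1, 0), let Z_* be a real number with 0 < Z_* ≤ 10^{−21}, let A_* ∈ [0, Z_*/2], let λ ≥ (3/2)Z_*, and let k ≤ −1 be an integer. Then for every η ∈ (0,1): (2/g(η))·( −kη(1−η) + λ(1−η)^2 ) + (2η^2/g(η)^2)·γ(1−η) > 0. (This is the statement that at energy ε = 0 the compactified Prüfer vector field points strictly upward along the horizontal line Ω = −π/2, so that Ω = −π/2 is a lower barrier and the winding number satisfies w_0 = 0 for all k ≤ −1.) -/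
set_option maxHeartbeats 1000000 in
/-- For `ε = 0` and `k ≤ −1`, the compactified Prüfer vector field points
strictly upward along the horizontal line `Ω = −π/2`, so `Ω = −π/2` is a lower barrier
(and the winding number satisfies `w₀ = 0`). -/
theorem rwn_lower_barrier_neg_k (γ Zs As lam : ℝ) (k : ℤ)
    (hγ : γ ∈ Set.Ico (-1 : ℝ) 0) (hZs : 0 < Zs) (hZs' : Zs ≤ 1e-21)
    (hAs : As ∈ Set.Icc (0 : ℝ) (Zs / 2)) (hlam : (3 / 2) * Zs ≤ lam) (hk : k ≤ -1)
    (g : ℝ → ℝ)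
    (hg : ∀ η, g η =
      Real.sqrt ((1 + 2 * As + Zs ^ 2) * η ^ 2 - 2 * (As + Zs ^ 2) * η + Zs ^ 2))
    (η : ℝ) (hη : η ∈ Set.Ioo (0 : ℝ) 1) :
    (2 / g η) * (-(k : ℝ) * η * (1 - η) + lam * (1 - η) ^ 2)
      + (2 * η ^ 2 / (g η) ^ 2) * γ * (1 - η) > 0 := by
  obtain ⟨hγ1, hγ0⟩ := hγ
  obtain ⟨hA0, hA1⟩ := hAs
  obtain ⟨hη0, hη1⟩ := hη
  have h1η : 0 < 1 - η := by linarith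
  have hk' : (1 : ℝ) ≤ -(k : ℝ) := by
    have : (k : ℝ) ≤ -1 := by exact_mod_cast hk
    linarith
  set Q : ℝ := (1 + 2 * As + Zs ^ 2) * η ^ 2 - 2 * (As + Zs ^ 2) * η + Zs ^ 2 with hQdef
  have hQpos : 0 < Q := by
    have h1 : 0 < Zs ^ 2 * (1 - η) ^ 2 := by positivity
    nlinarith [sq_nonneg (2 * η - Zs * (1 - η)), mul_pos hη0 h1η,
      mul_le_mul_of_nonneg_right hA1 (le_of_lt (mul_pos hη0 h1η))]
  set G : ℝ := g η with hGdef
  have hGsq : G ^ 2 = Q := by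
    rw [hGdef, hg η, Real.sq_sqrt hQpos.le]
  have hGpos : 0 < G := by
    rw [hGdef, hg η]
    exact Real.sqrt_pos.mpr hQpos
  -- the essential factor
  set R : ℝ := -(k : ℝ) * η + lam * (1 - η) with hRdef
  have hlam0 : 0 ≤ lam := by nlinarith
  have hRge : η + (3 / 2) * (Zs * (1 - η)) ≤ R := by
    rw [hRdef]
    have : (3 / 2) * Zs * (1 - η) ≤ lam * (1 - η) :=
      mul_le_mul_of_nonneg_right hlam h1η.le
    nlinarith
  have hRpos : 0 < R := by
    have : 0 < η + (3 / 2) * (Zs * (1 - η)) := by positivity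
    linarith
  have hkey : η ^ 2 * (-γ) < G * R := by
    have hL0 : 0 ≤ η ^ 2 * (-γ) := by nlinarith
    have hGR0 : 0 ≤ G * R := (mul_pos hGpos hRpos).le
    have hsq : (η ^ 2 * (-γ)) ^ 2 < (G * R) ^ 2 := by
      have h1 : (G * R) ^ 2 = Q * R ^ 2 := by rw [mul_pow, hGsq]
      rw [h1]
      have hu : 0 < η := hη0
      have hv : 0 < Zs * (1 - η) := mul_pos hZs h1η
      have hQge : η ^ 2 - η * (Zs * (1 - η)) + (Zs * (1 - η)) ^ 2 ≤ Q := by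
        have := mul_le_mul_of_nonneg_right hA1 (le_of_lt (mul_pos hη0 h1η))
        nlinarith
      have hγsq : (-γ) ^ 2 ≤ 1 := by nlinarith
      have hA' : 0 ≤ η + 3 / 2 * (Zs * (1 - η)) := by positivity
      have hB : (η + 3 / 2 * (Zs * (1 - η))) ^ 2 ≤ R ^ 2 := by
        apply pow_le_pow_left₀ hA' hRge
      have hC : (η ^ 2 - η * (Zs * (1 - η)) + (Zs * (1 - η)) ^ 2)
          * (η + 3 / 2 * (Zs * (1 - η))) ^ 2 ≤ Q * R ^ 2 := by
        apply mul_le_mul hQge hB (by positivity) hQpos.le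
      have hD : η ^ 4 < (η ^ 2 - η * (Zs * (1 - η)) + (Zs * (1 - η)) ^ 2)
          * (η + 3 / 2 * (Zs * (1 - η))) ^ 2 := by
        nlinarith [mul_pos (mul_pos (mul_pos hu hu) hu) hv,
          mul_pos (mul_pos (mul_pos hu hu) hv) hv,
          mul_pos (mul_pos (mul_pos hu hv) hv) hv,
          mul_pos (mul_pos (mul_pos hv hv) hv) hv]
      have hη4 : 0 ≤ η ^ 4 := by positivity
      calc (η ^ 2 * (-γ)) ^ 2 = η ^ 4 * (-γ) ^ 2 := by ring
        _ ≤ η ^ 4 * 1 := mul_le_mul_of_nonneg_left hγsq hη4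
        _ = η ^ 4 := mul_one _
        _ < _ := hD
        _ ≤ Q * R ^ 2 := hC
    exact lt_of_pow_lt_pow_left₀ 2 hGR0 hsq
  have hinner : 0 < G * R + γ * η ^ 2 := by nlinarith
  have hE : (2 / G) * (-(k : ℝ) * η * (1 - η) + lam * (1 - η) ^ 2)
      + (2 * η ^ 2 / G ^ 2) * γ * (1 - η)
      = (2 * (1 - η) / Q) * (G * R + γ * η ^ 2) := by
    rw [← hGsq, hRdef]
    field_simp
  rw [hE]
  exact mul_pos (by positivity) hinner
end

section
/- Let Z_* > 0, δ := 1.01, ν := 3, Λ := 0.000383, and suppose A_* ∈ [0, Z_*/10), γ ∈ (−1/(νδ), 0) = (−1/3.03, 0), λ ∈ [(3/2)Z_*, Λ], and let k ≥ 1 be an integer. Set a_k := λ/(k + λ − δγ) and b_k := λ/(k + λ + δγ) (so 0 < a_k < b_k < 1). Then for every η ∈ [a_k, b_k] and every Ω ∈ ℝ: (2η^2/g(η))·cos Ω + (2/g(η))·( kη(1−η) − λ(1−η)^2 )·sin Ω + (2η^2/g(η)^2)·γ(1−η) + (π/(b_k − a_k))·η(1−η)^2 > 0. (This is the slanted-barrier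 lemma: at energy ε = 0 the slope field of the compactified Prüfer system exceeds the slope −π/(b_k − a_k) of the line segment joining (a_k, −π/2) to (b_k, −3π/2).) -/
set_option maxHeartbeats 4000000

private lemma rwn_aux (u P s η : ℝ) (hu0 : 0 ≤ u) (huη : u * η ≤ 2.03)
    (hP1 : P ≤ η/3) (hP2 : -(η/3) ≤ P) (hs1 : s ≤ 1) (hs2 : -1 ≤ s) :
    -(0.677:ℝ) ≤ u * P * s := by
  nlinarith [mul_nonneg (mul_nonneg hu0 (by linarith : (0:ℝ) ≤ η/3 - P))
      (by linarith : (0:ℝ) ≤ 1 - s),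
    mul_nonneg (mul_nonneg hu0 (by linarith : (0:ℝ) ≤ η/3 + P))
      (by linarith : (0:ℝ) ≤ 1 + s)]

private lemma rwn_aux3 (v w η : ℝ) (hv : v ≤ 2.03) (hv0 : 0 ≤ v)
    (hw1 : -1/3.03 < w) (hw2 : w < 0) (h0 : 0 < η) (h1 : η ≤ 0.0006) :
    -(0.68:ℝ) ≤ v * w * (1 - η) := by
  nlinarith [mul_nonneg (mul_nonneg hv0 (by linarith : (0:ℝ) ≤ -w)) h0.le,
    mul_le_mul_of_nonneg_right hv (by linarith : (0:ℝ) ≤ -w)]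

private lemma rwn_aux4 (p η : ℝ) (hp : 3.1415 ≤ p) (h0 : 0 < η) (h1 : η ≤ 0.0006) :
    (3.13:ℝ) ≤ p * (1 - η) ^ 2 := by
  have hsq : (0.998:ℝ) ≤ (1 - η)^2 := by nlinarith
  nlinarith [mul_le_mul hp hsq (by norm_num) (by linarith)]

/-- Slanted-barrier lemma: with `δ = 1.01`, `ν = 3`, `Λ = 0.000383`,
at energy `ε = 0` the slope field of the compactified Prüfer system exceeds the slope
`−π/(b_k − a_k)` of the segment joining `(a_k, −π/2)` to `(b_k, −3π/2)`. -/
theorem rwn_slanted_barrier (Zs As γ lam : ℝ) (k : ℤ)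
    (hZ : 0 < Zs) (hAs : As ∈ Set.Ico (0 : ℝ) (Zs / 10))
    (hγ : γ ∈ Set.Ioo (-1 / 3.03 : ℝ) 0)
    (hlam : lam ∈ Set.Icc ((3 / 2) * Zs) (0.000383 : ℝ))
    (hk : 1 ≤ k)
    (g : ℝ → ℝ)
    (hg : ∀ η, g η =
      Real.sqrt ((1 + 2 * As + Zs ^ 2) * η ^ 2 - 2 * (As + Zs ^ 2) * η + Zs ^ 2))
    (ak bk : ℝ)
    (hak : ak = lam / ((k : ℝ) + lam - 1.01 * γ))
    (hbk : bk = lam / ((k : ℝ) + lam + 1.01 * γ))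
    (η Ω : ℝ) (hη : η ∈ Set.Icc ak bk) :
    (2 * η ^ 2 / g η) * Real.cos Ω
      + (2 / g η) * ((k : ℝ) * η * (1 - η) - lam * (1 - η) ^ 2) * Real.sin Ω
      + (2 * η ^ 2 / (g η) ^ 2) * γ * (1 - η)
      + (Real.pi / (bk - ak)) * η * (1 - η) ^ 2 > 0 := by
  obtain ⟨hγ1, hγ2⟩ := hγ
  obtain ⟨hAs0, hAs1⟩ := hAs
  obtain ⟨hlam1, hlam2⟩ := hlam
  obtain ⟨hη1, hη2⟩ := hη
  have hk' : (1:ℝ) ≤ (k:ℝ) := by exact_mod_cast hk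
  have hlam0 : 0 < lam := by nlinarith
  have hc1 : -1/3 < 1.01 * γ := by nlinarith
  have hc2 : 1.01 * γ < 0 := by nlinarith
  have hD2 : (2:ℝ)/3 < (k:ℝ) + lam + 1.01 * γ := by linarith
  have hD1 : (0:ℝ) < (k:ℝ) + lam - 1.01 * γ := by linarith
  have hD2' : (0:ℝ) < (k:ℝ) + lam + 1.01 * γ := by linarith
  -- bounds from η ∈ [ak, bk]
  have hak' : lam ≤ η * ((k:ℝ) + lam - 1.01 * γ) := by
    rw [hak, div_le_iff₀ hD1] at hη1; exact hη1
  have hbk' : η * ((k:ℝ) + lam + 1.01 * γ) ≤ lam := by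
    rw [hbk, le_div_iff₀ hD2'] at hη2; exact hη2
  have hakpos : 0 < ak := by rw [hak]; exact div_pos hlam0 hD1
  have hη0 : 0 < η := lt_of_lt_of_le hakpos hη1
  have hηs : η ≤ 0.0006 := by nlinarith
  -- barrier width
  have hBpos : 0 < bk - ak := by
    rw [hak, hbk]
    have : lam / ((k:ℝ) + lam - 1.01 * γ) < lam / ((k:ℝ) + lam + 1.01 * γ) :=
      div_lt_div_of_pos_left hlam0 hD2' (by linarith)
    linarith
  have hBle : bk - ak ≤ η := by
    have h2ak : bk ≤ 2 * ak := by
      rw [hak, hbk, ← mul_div_assoc, div_le_div_iff₀ hD2' hD1]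
      nlinarith
    linarith
  -- bounds on g
  have hgη := hg η
  have hQ99 : 0.99 * η^2 ≤ (1 + 2 * As + Zs ^ 2) * η ^ 2 - 2 * (As + Zs ^ 2) * η + Zs ^ 2 := by
    nlinarith [sq_nonneg (0.1*η - Zs*(1-η)),
      mul_nonneg (show (0:ℝ) ≤ Zs/10 - As by linarith)
        (show (0:ℝ) ≤ η*(1-η) by nlinarith)]
  have hQpos : 0 < (1 + 2 * As + Zs ^ 2) * η ^ 2 - 2 * (As + Zs ^ 2) * η + Zs ^ 2 := by
    nlinarith
  have hGpos : 0 < g η := by rw [hgη]; exact Real.sqrt_pos.mpr hQpos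
  have hG99 : 0.99 * η ≤ g η := by
    rw [hgη, show (0.99*η : ℝ) = Real.sqrt ((0.99*η)^2) from
      (Real.sqrt_sq (by positivity)).symm]
    exact Real.sqrt_le_sqrt (by nlinarith)
  have hG2 : (g η)^2 = (1 + 2 * As + Zs ^ 2) * η ^ 2 - 2 * (As + Zs ^ 2) * η + Zs ^ 2 := by
    rw [hgη]; exact Real.sq_sqrt hQpos.le
  -- Term 1
  have hdiv1 : 2 * η ^ 2 / g η ≤ 2.03 * η := by
    rw [div_le_iff₀ hGpos]; nlinarith [mul_le_mul_of_nonneg_left hG99 hη0.le]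
  have hdiv1' : 0 ≤ 2 * η ^ 2 / g η := by positivity
  have h1 : -(0.0013:ℝ) ≤ (2 * η ^ 2 / g η) * Real.cos Ω := by
    nlinarith [Real.neg_one_le_cos Ω, Real.cos_le_one Ω,
      mul_le_mul_of_nonneg_left (Real.neg_one_le_cos Ω) hdiv1']
  -- Term 2
  have hW2' : ((k:ℝ) + lam) * η - lam ≤ η/3 := by
    nlinarith [mul_nonneg hη0.le (show (0:ℝ) ≤ 1/3 + 1.01*γ by linarith)]
  have hW1' : -(η/3) ≤ ((k:ℝ) + lam) * η - lam := by
    nlinarith [mul_nonneg hη0.le (show (0:ℝ) ≤ 1/3 + 1.01*γ by linarith)]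
  have hP1 : (k:ℝ) * η * (1 - η) - lam * (1 - η) ^ 2 ≤ η/3 := by
    nlinarith [mul_le_mul_of_nonneg_left hW2' (show (0:ℝ) ≤ 1-η by linarith),
      sq_nonneg η]
  have hP2 : -(η/3) ≤ (k:ℝ) * η * (1 - η) - lam * (1 - η) ^ 2 := by
    nlinarith [mul_le_mul_of_nonneg_left hW1' (show (0:ℝ) ≤ 1-η by linarith),
      sq_nonneg η]
  have hu0 : 0 ≤ 2 / g η := by positivity
  have hu : 2 / g η * η ≤ 2.03 := by
    rw [div_mul_eq_mul_div, div_le_iff₀ hGpos]; linarith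
  have h2 : -(0.677:ℝ) ≤ (2 / g η) * ((k : ℝ) * η * (1 - η) - lam * (1 - η) ^ 2) * Real.sin Ω :=
    rwn_aux _ _ _ _ hu0 hu hP1 hP2 (Real.sin_le_one Ω) (Real.neg_one_le_sin Ω)
  -- Term 3
  have hv : 2 * η ^ 2 / (g η) ^ 2 ≤ 2.03 := by
    rw [hG2, div_le_iff₀ hQpos]; linarith
  have hv0 : 0 ≤ 2 * η ^ 2 / (g η) ^ 2 := by positivity
  have h3 : -(0.68:ℝ) ≤ (2 * η ^ 2 / (g η) ^ 2) * γ * (1 - η) :=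
    rwn_aux3 _ _ _ hv hv0 hγ1 hγ2 hη0 hηs
  -- Term 4
  have hr : Real.pi ≤ Real.pi / (bk - ak) * η := by
    rw [div_mul_eq_mul_div, le_div_iff₀ hBpos]
    exact mul_le_mul_of_nonneg_left hBle Real.pi_pos.le
  have h4 : (3.13:ℝ) ≤ (Real.pi / (bk - ak)) * η * (1 - η) ^ 2 := by
    have ha : (3.1415:ℝ) ≤ Real.pi / (bk - ak) * η :=
      le_trans (le_trans (by norm_num) Real.pi_gt_d6.le) hr
    exact rwn_aux4 _ _ ha hη0 hηs
  linarith [h1, h2, h3, h4]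
end

section
/- Let α ∈ [1/138, 1/137], let 𝒢 ∈ (0, 10^{−42}], let Z_* ∈ [ (α/2)·√𝒢, √𝒢 ), set γ := −Z_*/√𝒢, let A_* ∈ [0, Z_*/10), and let ε ∈ [0, 1). Then for every η ∈ (0, 0.003): 2η^2/g(η) + (2η^2/g(η)^2)·(γ(1−η) − εη) < 0. (This is the first barrier claim in the proof that the winding number satisfies w_ε ≥ 1 for k ≥ 1: the compactified Prüfer vector field points strictly downward along the horizontal line Ω = 0 for η ∈ (0, 0.003).) -/
/-- For `ε ∈ [0,1)` the compactified Prüfer vector field points strictly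
downward along the horizontal line `Ω = 0` for `η ∈ (0, 0.003)`; first barrier claim
in the proof that `w_ε ≥ 1` for `k ≥ 1`. -/
theorem rwn_downward_at_zero_line (α G Zs γ As ε : ℝ)
    (hα : α ∈ Set.Icc (1 / 138 : ℝ) (1 / 137))
    (hG : G ∈ Set.Ioc (0 : ℝ) (1e-42 : ℝ))
    (hZs : Zs ∈ Set.Ico ((α / 2) * Real.sqrt G) (Real.sqrt G))
    (hγ : γ = -Zs / Real.sqrt G)
    (hAs : As ∈ Set.Ico (0 : ℝ) (Zs / 10))
    (hε : ε ∈ Set.Ico (0 : ℝ) 1)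
    (g : ℝ → ℝ)
    (hg : ∀ η, g η =
      Real.sqrt ((1 + 2 * As + Zs ^ 2) * η ^ 2 - 2 * (As + Zs ^ 2) * η + Zs ^ 2))
    (η : ℝ) (hη : η ∈ Set.Ioo (0 : ℝ) (0.003 : ℝ)) :
    2 * η ^ 2 / g η + (2 * η ^ 2 / (g η) ^ 2) * (γ * (1 - η) - ε * η) < 0 := by
  obtain ⟨hη0, hη1⟩ := hη
  have hsG : (0 : ℝ) < Real.sqrt G := Real.sqrt_pos.mpr hG.1
  have hα0 : (0 : ℝ) < α := lt_of_lt_of_le (by norm_num) hα.1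
  have hZpos : 0 < Zs := lt_of_lt_of_le (by positivity) hZs.1
  have hZsmall : Zs ≤ 1e-21 := by
    have h1 : Real.sqrt G ≤ Real.sqrt (1e-42) := Real.sqrt_le_sqrt hG.2
    have h2 : Real.sqrt (1e-42 : ℝ) = 1e-21 := by
      rw [show (1e-42 : ℝ) = (1e-21) ^ 2 by norm_num, Real.sqrt_sq (by norm_num)]
    linarith [hZs.2]
  set c : ℝ := Zs / Real.sqrt G with hc
  have hcpos : 0 < c := div_pos hZpos hsG
  have hclb : 1 / 276 ≤ c := by
    have : α / 2 ≤ c := by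
      rw [hc, le_div_iff₀ hsG]
      linarith [hZs.1]
    linarith [hα.1]
  set Q : ℝ := (1 + 2 * As + Zs ^ 2) * η ^ 2 - 2 * (As + Zs ^ 2) * η + Zs ^ 2 with hQ
  have hAs0 := hAs.1
  have h1η : (0:ℝ) ≤ 1 - η := by linarith
  have hA1 : (0:ℝ) ≤ As * (η * (1 - η)) := mul_nonneg hAs0 (mul_nonneg hη0.le h1η)
  have hkey : Q < (c * (1 - η)) ^ 2 := by
    have hZ2 : Zs ^ 2 ≤ 1e-42 := by nlinarith
    have hstep : ((1/276)^2 - 1e-42 : ℝ) * 0.997^2 ≤ (c^2 - Zs^2) * (1-η)^2 :=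
      mul_le_mul (by nlinarith) (by nlinarith) (by norm_num) (by nlinarith)
    nlinarith [hA1]
  have hQpos : 0 < Q := by
    nlinarith [hA1, hAs.2, sq_nonneg (η - Zs * (1 - η)),
      mul_pos hZpos (mul_pos hη0 (by linarith : (0:ℝ) < 1 - η)),
      mul_nonneg (by linarith [hAs.2] : (0:ℝ) ≤ Zs / 10 - As) (mul_nonneg hη0.le h1η)]
  have hgpos : 0 < g η := by rw [hg η]; exact Real.sqrt_pos.mpr hQpos
  have hglt : g η < c * (1 - η) := by
    rw [hg η]
    exact (Real.sqrt_lt' (by nlinarith)).mpr hkey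
  have hγc : γ = -c := by rw [hγ, hc]; ring
  have hneg : g η + (γ * (1 - η) - ε * η) < 0 := by
    rw [hγc]
    have : 0 ≤ ε * η := mul_nonneg hε.1 hη0.le
    nlinarith
  have hrw : 2 * η ^ 2 / g η + (2 * η ^ 2 / (g η) ^ 2) * (γ * (1 - η) - ε * η)
      = (2 * η ^ 2 / (g η) ^ 2) * (g η + (γ * (1 - η) - ε * η)) := by
    field_simp
  rw [hrw]
  exact mul_neg_of_pos_of_neg (by positivity) hneg
end

section
/- Let α ∈ [1/138, 1/137], let 𝒢 ∈ (0, 10^{−42}], let Z_* ∈ [ (α/2)·√𝒢, √𝒢 ), set γ := −Z_*/√𝒢, let A_* ∈ [0, Z_*/10), let λ ∈ [(3/2)Z_*, α/(2π)], and let k ≥ 1 be an integer. Set η₀ := 0.0003 and Ω₀(η) := −(π/(1−η₀))·(η − η₀). Then for every η ∈ [η₀, 1): (2η^2/g(η))·cos Ω₀(η) + (2/g(η))·( kη(1−η) − λ(1−η)^2 )·sin Ω₀(η) + (2η^2/g(η)^2)·γ(1−η) + (π/(1−η₀))·η(1−η)^2 < 0. (This is the slanted upper-barrier claim in the proof that the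 winding number satisfies w_ε ≥ 1 for k ≥ 1: along the line segment joining (η₀, 0) to (1, −π), the slope field of the compactified Prüfer system at energy ε = 0 is strictly less than the slope of the segment.) -/
set_option maxHeartbeats 4000000 in
/-- Slanted upper-barrier claim: along the segment joining `(η₀, 0)` to
`(1, −π)` with `η₀ = 0.0003`, the slope field of the compactified Prüfer system at
energy `ε = 0` is strictly less than the slope of the segment. -/
theorem rwn_slanted_upper_barrier (α G Zs γ As lam : ℝ) (k : ℤ)
    (hα : α ∈ Set.Icc (1 / 138 : ℝ) (1 / 137))
    (hG : G ∈ Set.Ioc (0 : ℝ) (1e-42 : ℝ))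
    (hZs : Zs ∈ Set.Ico ((α / 2) * Real.sqrt G) (Real.sqrt G))
    (hγ : γ = -Zs / Real.sqrt G)
    (hAs : As ∈ Set.Ico (0 : ℝ) (Zs / 10))
    (hlam : lam ∈ Set.Icc ((3 / 2) * Zs) (α / (2 * Real.pi)))
    (hk : 1 ≤ k)
    (g : ℝ → ℝ)
    (hg : ∀ η, g η =
      Real.sqrt ((1 + 2 * As + Zs ^ 2) * η ^ 2 - 2 * (As + Zs ^ 2) * η + Zs ^ 2))
    (η₀ : ℝ) (hη₀ : η₀ = 0.0003)
    (Ω₀ : ℝ → ℝ) (hΩ₀ : ∀ η, Ω₀ η = -(Real.pi / (1 - η₀)) * (η - η₀))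
    (η : ℝ) (hη : η ∈ Set.Ico η₀ 1) :
    (2 * η ^ 2 / g η) * Real.cos (Ω₀ η)
      + (2 / g η) * ((k : ℝ) * η * (1 - η) - lam * (1 - η) ^ 2) * Real.sin (Ω₀ η)
      + (2 * η ^ 2 / (g η) ^ 2) * γ * (1 - η)
      + (Real.pi / (1 - η₀)) * η * (1 - η) ^ 2 < 0 := by
  obtain ⟨hα1, hα2⟩ := hα
  obtain ⟨hG1, hG2⟩ := hG
  obtain ⟨hZ1, hZ2⟩ := hZs
  obtain ⟨hA1, hA2⟩ := hAs
  obtain ⟨hl1, hl2⟩ := hlam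
  subst hη₀ hγ
  obtain ⟨hη1, hη2⟩ := hη
  have hπ1 : (3.141592 : ℝ) < Real.pi := Real.pi_gt_d6
  have hπ2 : Real.pi < 3.141593 := Real.pi_lt_d6
  have hπpos : (0:ℝ) < Real.pi := Real.pi_pos
  have hsG : 0 < Real.sqrt G := Real.sqrt_pos.mpr hG1
  have hZpos : 0 < Zs := by nlinarith only [hZ1, hα1, hsG]
  have hZsq : Zs ^ 2 < G := by nlinarith only [Real.sq_sqrt hG1.le, hZ2, hZpos]
  have hZe : Zs < 1e-21 := by nlinarith only [hZsq, hG2, hZpos]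
  have hη0le : (0.0003:ℝ) ≤ η := hη1
  have hηpos : (0:ℝ) < η := by linarith only [hη0le]
  have hu0 : (0:ℝ) ≤ 1 - η := by linarith only [hη2]
  -- γ bound
  have hγ276 : -Zs / Real.sqrt G ≤ -(1/276) := by
    have h1 : (1:ℝ)/276 ≤ Zs / Real.sqrt G := by
      rw [le_div_iff₀ hsG]
      nlinarith only [hZ1, hα1, hsG.le]
    have h2 : -Zs / Real.sqrt G = -(Zs / Real.sqrt G) := by ring
    linarith only [h1, h2.le, h2.ge]
  -- lam bounds
  have hlam0 : (0:ℝ) ≤ lam := by nlinarith only [hl1, hZpos]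
  have hlamU : lam ≤ 0.0011618 := by
    have h2π : (0:ℝ) < 2 * Real.pi := by linarith only [hπpos]
    have h3 : α / (2 * Real.pi) ≤ 0.0011618 := by
      rw [div_le_iff₀ h2π]; nlinarith only [hα2, hπ1]
    linarith only [h3, hl2]
  -- bounds on g η
  have hgη := hg η
  have hglo : η - Zs ≤ g η := by
    rw [hgη]
    apply Real.le_sqrt_of_sq_le
    nlinarith only [hA1, hA2, hZpos, hZe, hηpos,
      mul_nonneg (mul_nonneg hA1 hηpos.le) hηpos.le,
      mul_nonneg (by linarith only [hA2] : (0:ℝ) ≤ Zs/10 - As) hηpos.le,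
      mul_nonneg (mul_nonneg (sq_nonneg Zs) hηpos.le) hηpos.le,
      mul_nonneg (mul_nonneg (by linarith only [hZe] : (0:ℝ) ≤ 1e-21 - Zs) hZpos.le) hηpos.le,
      mul_nonneg hZpos.le hηpos.le, hη0le]
  have hghi : g η ≤ η + Zs := by
    rw [hgη]
    have h : (1 + 2 * As + Zs ^ 2) * η ^ 2 - 2 * (As + Zs ^ 2) * η + Zs ^ 2 ≤ (η + Zs)^2 := by
      nlinarith only [mul_nonneg (mul_nonneg hA1 hηpos.le) hu0,
        mul_nonneg hZpos.le hηpos.le,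
        mul_nonneg (mul_nonneg (sq_nonneg Zs) hηpos.le) hu0,
        mul_nonneg (mul_nonneg (sq_nonneg Zs) hηpos.le) hηpos.le]
    calc Real.sqrt ((1 + 2 * As + Zs ^ 2) * η ^ 2 - 2 * (As + Zs ^ 2) * η + Zs ^ 2)
        ≤ Real.sqrt ((η + Zs)^2) := Real.sqrt_le_sqrt h
      _ = η + Zs := Real.sqrt_sq (by linarith only [hηpos, hZpos])
  have hgpos : 0 < g η := by linarith only [hglo, hZe, hη0le]
  -- t and Ω
  set t : ℝ := (η - 0.0003) / 0.9997 with htdef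
  have hηt : η = 0.0003 + 0.9997 * t := by rw [htdef]; ring
  have ht0 : 0 ≤ t := by
    rw [htdef]
    apply div_nonneg (by linarith only [hη0le]) (by norm_num)
  have ht1 : t < 1 := by rw [htdef, div_lt_one (by norm_num)]; linarith only [hη2]
  have hΩt : Ω₀ η = -(Real.pi * t) := by
    rw [hΩ₀ η, htdef]
    have h : (1:ℝ) - 0.0003 = 0.9997 := by norm_num
    rw [h]; field_simp
  rw [hΩt, Real.cos_neg, Real.sin_neg]
  set s' := Real.sin (Real.pi * t) with hs'def
  set co := Real.cos (Real.pi * t) with hcodef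
  have hs0 : 0 ≤ s' := by
    rw [hs'def]
    apply Real.sin_nonneg_of_nonneg_of_le_pi
    · positivity
    · nlinarith only [ht1, hπpos, ht0]
  have hs1 : s' ≤ 1 := Real.sin_le_one _
  have hco1 : co ≤ 1 := Real.cos_le_one _
  have hcom1 : -1 ≤ co := Real.neg_one_le_cos _
  -- T1
  have hdup : 2 * η ^ 2 / g η ≤ 2 * η + 3e-21 := by
    rw [div_le_iff₀ hgpos]
    nlinarith only [hglo, hZe, hη0le, hZpos,
      mul_nonneg (by linarith only [hηpos] : (0:ℝ) ≤ 2*η + 3e-21) (sub_nonneg.2 hglo),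
      mul_nonneg (by linarith only [hZe] : (0:ℝ) ≤ 1e-21 - Zs) hηpos.le]
  have hdlo : 2 * η - 3e-21 ≤ 2 * η ^ 2 / g η := by
    rw [le_div_iff₀ hgpos]
    nlinarith only [hghi, hZe, hη0le, hZpos,
      mul_nonneg (by linarith only [hη0le] : (0:ℝ) ≤ 2*η - 3e-21) (sub_nonneg.2 hghi),
      mul_nonneg (by linarith only [hZe] : (0:ℝ) ≤ 1e-21 - Zs) hηpos.le]
  have hT1 : 2 * η ^ 2 / g η * co ≤ 2 * η * co + 3e-21 := by
    nlinarith only [mul_nonneg (by linarith only [hdup] : (0:ℝ) ≤ 2*η + 3e-21 - 2*η^2/g η)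
        (by linarith only [hcom1] : (0:ℝ) ≤ 1 + co),
      mul_nonneg (by linarith only [hdlo] : (0:ℝ) ≤ 2*η^2/g η - (2*η - 3e-21))
        (by linarith only [hco1] : (0:ℝ) ≤ 1 - co)]
  -- T2
  have hk1 : (1:ℝ) ≤ (k:ℝ) := by exact_mod_cast hk
  have h199 : 1.99 * g η ≤ 2 * η := by nlinarith only [hghi, hZe, hη0le]
  have hT2 : 2 / g η * ((k : ℝ) * η * (1 - η) - lam * (1 - η) ^ 2) * (-s')
      ≤ -(1.99 * ((1 - η) * s')) + 2 / g η * (lam * (1 - η) ^ 2) * s' := by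
    have e1 : 1.99 * ((1 - η) * s') ≤ 2 / g η * ((k : ℝ) * η * (1 - η)) * s' := by
      rw [div_mul_eq_mul_div, div_mul_eq_mul_div, le_div_iff₀ hgpos]
      nlinarith only [mul_nonneg (sub_nonneg.2 h199) (mul_nonneg hu0 hs0),
        mul_nonneg (mul_nonneg (mul_nonneg hu0 hs0)
          (by linarith only [hk1] : (0:ℝ) ≤ (k:ℝ) - 1)) hηpos.le]
    have e2 : 2 / g η * ((k : ℝ) * η * (1 - η) - lam * (1 - η) ^ 2) * (-s')
        = -(2 / g η * ((k : ℝ) * η * (1 - η)) * s') + 2 / g η * (lam * (1 - η) ^ 2) * s' := by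
      ring
    rw [e2]
    linarith only [e1]
  -- T3
  have hg2 : (g η)^2 ≤ (η + Zs)^2 := by nlinarith only [hghi, hgpos.le]
  have hr198 : 1.98 ≤ 2 * η ^ 2 / (g η) ^ 2 := by
    rw [le_div_iff₀ (by positivity)]
    nlinarith only [hg2, hZe, hη0le, hZpos, mul_nonneg hZpos.le hηpos.le,
      mul_nonneg (by linarith only [hZe] : (0:ℝ) ≤ 1e-21 - Zs) hZpos.le]
  have hT3 : 2 * η ^ 2 / (g η) ^ 2 * (-Zs / Real.sqrt G) * (1 - η) ≤ -(0.99/138) * (1 - η) := by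
    have hγn : (0:ℝ) ≤ -(-Zs / Real.sqrt G) - 1/276 := by linarith only [hγ276]
    nlinarith only [mul_nonneg (mul_nonneg (sub_nonneg.2 hr198)
        (by linarith only [hγn] : (0:ℝ) ≤ -(-Zs / Real.sqrt G))) hu0,
      mul_nonneg hγn hu0]
  -- T4
  have hT4 : Real.pi / (1 - 0.0003) * η * (1 - η) ^ 2 ≤ 3.142536 * (η * (1 - η) ^ 2) := by
    have hc : (1:ℝ) - 0.0003 = 0.9997 := by norm_num
    rw [hc]
    have hπc : Real.pi / 0.9997 ≤ 3.142536 := by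
      rw [div_le_iff₀ (by norm_num)]; nlinarith only [hπ2]
    nlinarith only [mul_nonneg (sub_nonneg.2 hπc) (mul_nonneg hηpos.le (sq_nonneg (1 - η)))]
  -- generic sin lower bound for w ∈ [0, 1/2]
  have hπ3 : Real.pi ^ 3 ≤ 3.141593 ^ 3 := by
    nlinarith only [hπpos.le, sq_nonneg Real.pi, hπ2, hπ1]
  have sinlow : ∀ w : ℝ, 0 ≤ w → w ≤ 1/2 →
      3.141592 * w - 5.81368 * w ^ 3 ≤ Real.sin (Real.pi * w) := by
    intro w hw0 hw1
    have hz0 : 0 ≤ Real.pi * w / 2 := by positivity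
    have hz1 : Real.pi * w / 2 ≤ 1 := by nlinarith only [hπ2, hw0, hw1, hπpos]
    have hsz : Real.pi * w / 2 - (Real.pi * w / 2) ^ 3 / 4 ≤ Real.sin (Real.pi * w / 2) := by
      rcases eq_or_lt_of_le hz0 with h | h
      · rw [← h]; norm_num
      · linarith [Real.sin_gt_sub_cube h, pow_nonneg hz0 3]
    have hcz : 1 - (Real.pi * w / 2) ^ 2 / 2 ≤ Real.cos (Real.pi * w / 2) :=
      Real.one_sub_sq_div_two_le_cos
    have hq0 : 0 ≤ Real.pi * w / 2 - (Real.pi * w / 2) ^ 3 / 4 := by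
      nlinarith only [hz0, hz1, sq_nonneg (Real.pi * w / 2)]
    have hr0 : 0 ≤ 1 - (Real.pi * w / 2) ^ 2 / 2 := by
      nlinarith only [hz0, hz1]
    have hsin2 : Real.sin (Real.pi * w)
        = 2 * Real.sin (Real.pi * w / 2) * Real.cos (Real.pi * w / 2) := by
      rw [show Real.pi * w = 2 * (Real.pi * w / 2) by ring, Real.sin_two_mul]
      ring_nf
    have hprod : (Real.pi * w / 2 - (Real.pi * w / 2) ^ 3 / 4) * (1 - (Real.pi * w / 2) ^ 2 / 2)
        ≤ Real.sin (Real.pi * w / 2) * Real.cos (Real.pi * w / 2) :=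
      mul_le_mul hsz hcz hr0 (le_trans hq0 hsz)
    rw [hsin2]
    nlinarith only [hprod, mul_nonneg hw0 (by linarith only [hπ1] : (0:ℝ) ≤ Real.pi - 3.141592),
      mul_nonneg (mul_nonneg (mul_nonneg hw0 hw0) hw0)
        (by nlinarith only [hπ3, hπ1] : (0:ℝ) ≤ 5.81368 - 3/16 * Real.pi ^ 3),
      mul_nonneg (pow_nonneg (mul_nonneg hπpos.le hw0) 5) (by norm_num : (0:ℝ) ≤ 1/128)]
  -- main case split
  rcases le_or_gt t (1/2) with hc | hc
  · -- Case 1 : t ≤ 1/2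
    have hslow : 3.141592 * t - 5.81368 * t ^ 3 ≤ s' := sinlow t ht0 hc
    have hsup : s' ≤ 3.141593 * t := by
      have h := Real.sin_le (by positivity : (0:ℝ) ≤ Real.pi * t)
      rw [← hs'def] at h
      nlinarith only [h, mul_nonneg ht0 (by linarith only [hπ2] : (0:ℝ) ≤ 3.141593 - Real.pi)]
    -- cos upper bound
    have hcoU : co ≤ 1 - 4.9347 * t ^ 2 * (1 - 0.61686 * t ^ 2) ^ 2 := by
      have hz0 : 0 ≤ Real.pi * t / 2 := by positivity
      have hz1 : Real.pi * t / 2 ≤ 1 := by nlinarith only [hπ2, ht0, hc, hπpos]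
      have hsz : Real.pi * t / 2 - (Real.pi * t / 2) ^ 3 / 4 ≤ Real.sin (Real.pi * t / 2) := by
        rcases eq_or_lt_of_le hz0 with h | h
        · rw [← h]; norm_num
        · linarith [Real.sin_gt_sub_cube h, pow_nonneg hz0 3]
      have hq2 : 1.570796 * t * (1 - 0.61686 * t ^ 2)
          ≤ Real.pi * t / 2 - (Real.pi * t / 2) ^ 3 / 4 := by
        nlinarith only [ht0, hc, hπ1, hπ2, hπ3,
          mul_nonneg ht0 (by linarith only [hπ1] : (0:ℝ) ≤ Real.pi - 3.141592),
          mul_nonneg (mul_nonneg (mul_nonneg ht0 ht0) ht0)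
            (by nlinarith only [hπ3] : (0:ℝ) ≤ 0.61686 * 8 - Real.pi ^ 3 / 8),
          mul_nonneg ht0 ht0]
      have hq20 : (0:ℝ) ≤ 1.570796 * t * (1 - 0.61686 * t ^ 2) := by
        nlinarith only [ht0, hc, mul_nonneg (mul_nonneg ht0 ht0) ht0]
      have hs2 : (1.570796 * t * (1 - 0.61686 * t ^ 2)) ^ 2 ≤ Real.sin (Real.pi * t / 2) ^ 2 := by
        have h := le_trans hq2 hsz
        nlinarith only [h, hq20]
      have hid : co = 1 - 2 * Real.sin (Real.pi * t / 2) ^ 2 := by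
        rw [hcodef, show Real.pi * t = 2 * (Real.pi * t / 2) by ring, Real.cos_two_mul',
          Real.cos_sq']
        ring
      rw [hid]
      nlinarith only [hs2]
    -- key polynomial inequality
    have hd : (0:ℝ) < 0.0003 + 0.9997 * t := by nlinarith only [ht0]
    have hkey : (2 * η * co - 1.99 * ((1 - η) * s') - 0.99/138 * (1 - η)
        + 3.142536 * (η * (1 - η) ^ 2) + 3e-21) * η + 2.01/274 * (t * (1 - η) ^ 2) < 0 := by
      rw [hηt]
      rcases le_or_gt t 0.02 with hc2 | hc2
      · have hcoη : 2 * (0.0003 + 0.9997 * t) * co ≤ 2 * (0.0003 + 0.9997 * t) := by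
          nlinarith only [hd, hco1]
        nlinarith only [hslow, hcoη, ht0, hc2, sq_nonneg (t - 0.001), sq_nonneg t,
          mul_nonneg ht0 ht0, mul_nonneg (mul_nonneg ht0 ht0) ht0, sq_nonneg (t-0.02),
          mul_nonneg (mul_nonneg ht0 ht0) (by linarith only [hc2] : (0:ℝ) ≤ 0.02 - t)]
      · nlinarith only [hslow, hcoU, ht0, hc, hc2, sq_nonneg (t - 0.2), sq_nonneg (t-0.02),
          sq_nonneg (t-0.5),
          mul_nonneg (by linarith only [hc2] : (0:ℝ) ≤ t - 0.02)
            (by linarith only [hc] : (0:ℝ) ≤ 0.5 - t),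
          mul_nonneg (mul_nonneg (by linarith only [hc2] : (0:ℝ) ≤ t - 0.02)
            (by linarith only [hc] : (0:ℝ) ≤ 0.5 - t))
            (by linarith only [hc] : (0:ℝ) ≤ 0.5 - t),
          mul_nonneg (mul_nonneg (by linarith only [hc2] : (0:ℝ) ≤ t - 0.02)
            (by linarith only [hc2] : (0:ℝ) ≤ t - 0.02))
            (by linarith only [hc] : (0:ℝ) ≤ 0.5 - t),
          sq_nonneg (t*t - 0.1)]
    -- λ-term bound (case 1)
    have hT2b : 2 / g η * (lam * (1 - η) ^ 2) * s' ≤ 2.01/274 * (t * (1 - η) ^ 2) / η := by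
      have hgd : 2 / g η ≤ 2.001 / η := by
        rw [div_le_div_iff₀ hgpos hηpos]
        nlinarith only [hglo, hZe, hη0le]
      have hlamsq : lam * (1 - η) ^ 2 ≤ 0.0011618 * (1 - η) ^ 2 := by
        nlinarith only [mul_nonneg (by linarith only [hlamU] : (0:ℝ) ≤ 0.0011618 - lam)
          (sq_nonneg (1-η))]
      have hstep1 : 2 / g η * (lam * (1 - η) ^ 2) * s'
          ≤ 2.001 / η * (0.0011618 * (1 - η) ^ 2) * (3.141593 * t) := by
        apply mul_le_mul _ hsup hs0 (by positivity)
        exact mul_le_mul hgd hlamsq (by positivity) (by positivity)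
      have hstep2 : 2.001 / η * (0.0011618 * (1 - η) ^ 2) * (3.141593 * t)
          ≤ 2.01/274 * (t * (1 - η) ^ 2) / η := by
        have e1 : 2.001 / η * (0.0011618 * (1 - η) ^ 2) * (3.141593 * t)
            = (2.001*0.0011618*3.141593) * (t * (1 - η) ^ 2 / η) := by ring
        have e2 : 2.01/274 * (t * (1 - η) ^ 2) / η = (2.01/274) * (t * (1 - η) ^ 2 / η) := by
          ring
        rw [e1, e2]
        have hX : (0:ℝ) ≤ t * (1 - η) ^ 2 / η := by positivity
        nlinarith only [hX]
      linarith only [hstep1, hstep2]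
    have hfin : 2 * η * co + 3e-21 - 1.99 * ((1 - η) * s')
        + 2.01/274 * (t * (1 - η) ^ 2) / η - 0.99/138 * (1 - η)
        + 3.142536 * (η * (1 - η) ^ 2) < 0 := by
      have heq : 2 * η * co + 3e-21 - 1.99 * ((1 - η) * s')
          + 2.01/274 * (t * (1 - η) ^ 2) / η - 0.99/138 * (1 - η)
          + 3.142536 * (η * (1 - η) ^ 2)
          = ((2 * η * co - 1.99 * ((1 - η) * s') - 0.99/138 * (1 - η)
            + 3.142536 * (η * (1 - η) ^ 2) + 3e-21) * η + 2.01/274 * (t * (1 - η) ^ 2)) / η := by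
        field_simp
        ring
      rw [heq]
      exact div_neg_of_neg_of_pos hkey hηpos
    linarith only [hT1, hT2, hT2b, hT3, hT4, hfin]
  · -- Case 2 : t > 1/2
    have hv1 : 1 - t ≤ 1/2 := by linarith only [hc]
    have hv0 : 0 ≤ 1 - t := by linarith only [ht1]
    have hsv : Real.sin (Real.pi * t) = Real.sin (Real.pi * (1 - t)) := by
      rw [show Real.pi * (1-t) = Real.pi - Real.pi * t by ring, Real.sin_pi_sub]
    have hslow : 3.141592 * (1-t) - 5.81368 * (1-t) ^ 3 ≤ s' := by
      rw [hs'def, hsv]; exact sinlow (1-t) hv0 hv1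
    have hcoU : co ≤ 4.93481 * (1-t) ^ 2 - 1 := by
      have hcv : co = -Real.cos (Real.pi * (1 - t)) := by
        rw [hcodef, show Real.pi * (1-t) = Real.pi - Real.pi * t by ring, Real.cos_pi_sub]
        ring
      have h1 : 1 - (Real.pi * (1-t)) ^ 2 / 2 ≤ Real.cos (Real.pi * (1 - t)) :=
        Real.one_sub_sq_div_two_le_cos
      rw [hcv]
      nlinarith only [h1, sq_nonneg (1-t), mul_nonneg hv0 hv0, hπ2, hπpos,
        mul_nonneg (mul_nonneg hv0 hv0)
          (by nlinarith only [hπ2, hπpos] : (0:ℝ) ≤ 2*4.93481 - Real.pi^2)]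
    have hη5 : (0.50015:ℝ) ≤ η := by rw [hηt]; linarith only [hc]
    have hT2b : 2 / g η * (lam * (1 - η) ^ 2) * s' ≤ 0.00467 * (1 - η) ^ 2 := by
      have hgd4 : 2 / g η ≤ 4.002 := by
        rw [div_le_iff₀ hgpos]
        nlinarith only [hglo, hZe, hη5]
      have hlamsq : lam * (1 - η) ^ 2 ≤ 0.0011618 * (1 - η) ^ 2 := by
        nlinarith only [mul_nonneg (by linarith only [hlamU] : (0:ℝ) ≤ 0.0011618 - lam)
          (sq_nonneg (1-η))]
      have hstep1 : 2 / g η * (lam * (1 - η) ^ 2) * s'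
          ≤ 4.002 * (0.0011618 * (1 - η) ^ 2) * 1 := by
        apply mul_le_mul _ hs1 hs0 (by positivity)
        exact mul_le_mul hgd4 hlamsq (by positivity) (by norm_num)
      nlinarith only [hstep1, sq_nonneg (1-η)]
    have hfin : 2 * η * co + 3e-21 - 1.99 * ((1 - η) * s')
        + 0.00467 * (1 - η) ^ 2 - 0.99/138 * (1 - η)
        + 3.142536 * (η * (1 - η) ^ 2) < 0 := by
      rw [hηt]
      nlinarith only [hslow, hcoU, ht1, hc, sq_nonneg (t - 0.5), sq_nonneg (1-t),
        mul_nonneg (by linarith only [hc] : (0:ℝ) ≤ t - 0.5)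
          (by linarith only [ht1] : (0:ℝ) ≤ 1 - t),
        mul_nonneg (mul_nonneg (by linarith only [hc] : (0:ℝ) ≤ t - 0.5)
          (by linarith only [ht1] : (0:ℝ) ≤ 1 - t))
          (by linarith only [ht1] : (0:ℝ) ≤ 1 - t),
        sq_nonneg ((1-t)*(1-t) - 0.1)]
    linarith only [hT1, hT2, hT2b, hT3, hT4, hfin]
end

section
/- Let Z_* > 0, A_* ∈ [0, Z_*), γ, λ, ε ∈ ℝ, and let k be a nonzero integer. Let f(r) := sqrt(1 − 2A_*/r + Z_*^2/r^2) for r > 0. Suppose R, Ω : (0, ∞) → ℝ are differentiable and satisfy R'(r) = R(r)·[ sin Ω(r)/f(r) + (λ/r^2 − k/r)·cos Ω(r)/f(r) ] and Ω'(r) = (2/f(r))·cos Ω(r) + (2/f(r))·(k/r − λ/r^2)·sin Ω(r) + (2/f(r)^2)·(γ/r − ε). Then u(r) := R(r)·cos(Ω(r)/2) and v(r) := R(r)·sin(Ω(r)/2) satisfy the radial Dirac eigenvalue system: u'(r) + (1/f(r))·(k/r − λ/r^2)·u(r) − (1/f(r)^2)·(f(r) − γ/r + ε)·v(r) = 0 and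 v'(r) − (1/f(r))·(k/r − λ/r^2)·v(r) − (1/f(r)^2)·(f(r) + γ/r − ε)·u(r) = 0 for all r > 0. -/
/-- The Prüfer transform: if `R` and `Ω` solve the amplitude and angle
equations on `(0,∞)`, then `u = R cos(Ω/2)` and `v = R sin(Ω/2)` solve the radial Dirac
eigenvalue system for the reduced hamiltonian on the RWN spacetime. -/
theorem rwn_prufer_transform (Zs As γ lam ε : ℝ) (k : ℤ)
    (hZ : 0 < Zs) (hAs : As ∈ Set.Ico (0 : ℝ) Zs) (hk : k ≠ 0)
    (f : ℝ → ℝ) (hf : ∀ r, f r = Real.sqrt (1 - 2 * As / r + Zs ^ 2 / r ^ 2))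
    (R Ω : ℝ → ℝ)
    (hR : ∀ r, 0 < r → HasDerivAt R
      (R r * (Real.sin (Ω r) / f r
        + (lam / r ^ 2 - (k : ℝ) / r) * Real.cos (Ω r) / f r)) r)
    (hΩ : ∀ r, 0 < r → HasDerivAt Ω
      ((2 / f r) * Real.cos (Ω r)
        + (2 / f r) * ((k : ℝ) / r - lam / r ^ 2) * Real.sin (Ω r)
        + (2 / (f r) ^ 2) * (γ / r - ε)) r)
    (u v : ℝ → ℝ)
    (hu : ∀ r, u r = R r * Real.cos (Ω r / 2))
    (hv : ∀ r, v r = R r * Real.sin (Ω r / 2)) :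
    ∀ r, 0 < r →
      HasDerivAt u
        (-(1 / f r) * ((k : ℝ) / r - lam / r ^ 2) * u r
          + (1 / (f r) ^ 2) * (f r - γ / r + ε) * v r) r ∧
      HasDerivAt v
        ((1 / f r) * ((k : ℝ) / r - lam / r ^ 2) * v r
          + (1 / (f r) ^ 2) * (f r + γ / r - ε) * u r) r := by
  have hufun : u = fun r => R r * Real.cos (Ω r / 2) := funext hu
  have hvfun : v = fun r => R r * Real.sin (Ω r / 2) := funext hv
  subst hufun hvfun
  intro r hr
  have hr' : r ≠ 0 := ne_of_gt hr
  -- positivity of f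
  have hin : 0 < 1 - 2 * As / r + Zs ^ 2 / r ^ 2 := by
    have h1 : 1 - 2 * As / r + Zs ^ 2 / r ^ 2 = ((r - As) ^ 2 + (Zs ^ 2 - As ^ 2)) / r ^ 2 := by
      field_simp; ring
    rw [h1]
    apply div_pos _ (by positivity)
    have : As ^ 2 < Zs ^ 2 := by nlinarith [hAs.1, hAs.2]
    nlinarith [sq_nonneg (r - As)]
  have hfpos : 0 < f r := by rw [hf r]; exact Real.sqrt_pos.mpr hin
  have hfne : f r ≠ 0 := ne_of_gt hfpos
  -- derivatives
  have hRd := hR r hr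
  have hΩd := hΩ r hr
  have hΩ2 : HasDerivAt (fun r => Ω r / 2)
      (((2 / f r) * Real.cos (Ω r)
        + (2 / f r) * ((k : ℝ) / r - lam / r ^ 2) * Real.sin (Ω r)
        + (2 / (f r) ^ 2) * (γ / r - ε)) / 2) r := hΩd.div_const 2
  have hc : HasDerivAt (fun r => Real.cos (Ω r / 2))
      (-Real.sin (Ω r / 2) * (((2 / f r) * Real.cos (Ω r)
        + (2 / f r) * ((k : ℝ) / r - lam / r ^ 2) * Real.sin (Ω r)
        + (2 / (f r) ^ 2) * (γ / r - ε)) / 2)) r :=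
    hΩ2.cos
  have hs : HasDerivAt (fun r => Real.sin (Ω r / 2))
      (Real.cos (Ω r / 2) * (((2 / f r) * Real.cos (Ω r)
        + (2 / f r) * ((k : ℝ) / r - lam / r ^ 2) * Real.sin (Ω r)
        + (2 / (f r) ^ 2) * (γ / r - ε)) / 2)) r :=
    hΩ2.sin
  have hU := hRd.mul hc
  have hV := hRd.mul hs
  -- trig identities
  have hsin : Real.sin (Ω r) = 2 * Real.sin (Ω r / 2) * Real.cos (Ω r / 2) := by
    rw [show Ω r = 2 * (Ω r / 2) by ring, Real.sin_two_mul]; ring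
  have hcos : Real.cos (Ω r) = Real.cos (Ω r / 2) ^ 2 - Real.sin (Ω r / 2) ^ 2 := by
    have h := Real.cos_sq (Ω r / 2)
    rw [show 2 * (Ω r / 2) = Ω r by ring] at h
    have hp := Real.sin_sq_add_cos_sq (Ω r / 2)
    linarith
  have hpyth := Real.sin_sq_add_cos_sq (Ω r / 2)
  have hF : f r * (f r)⁻¹ = 1 := mul_inv_cancel₀ hfne
  constructor
  · refine hU.congr_deriv ?_
    symm
    rw [hsin, hcos]
    linear_combination ((f r)⁻¹ * R r * (((k : ℝ) / r - lam / r ^ 2) * Real.cos (Ω r / 2)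
        - Real.sin (Ω r / 2))) * hpyth
      + ((f r)⁻¹ * R r * Real.sin (Ω r / 2)) * hF
  · refine hV.congr_deriv ?_
    symm
    rw [hsin, hcos]
    linear_combination (-(f r)⁻¹ * R r * (Real.cos (Ω r / 2)
        + ((k : ℝ) / r - lam / r ^ 2) * Real.sin (Ω r / 2))) * hpyth
      + ((f r)⁻¹ * R r * Real.cos (Ω r / 2)) * hF
end
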